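/- Assume (A1) and (A2). Let M be a polytopal menu with M ⊆ M_NR. Then M is Pareto-optimal if and only if M^− = M_NSR^−, i.e., M has the same set of u_L-minimizing points as the no-swap-regret menu. -/

import Mathlib

open Finset

noncomputable section

/-- The product CSP `x ⊗ y`. -/
def prodCSP {m n : ℕ} (x : Fin m → ℝ) (y : Fin n → ℝ) : Fin m × Fin n → ℝ :=
  fun p => x p.1 * y p.2

/-- The `j`-th vertex `e_j` of a simplex. -/
def pureVec {k : ℕ} (j : Fin k) : Fin k → ℝ := fun j' => if j' = j then 1 else 0

/-- Linear extension of a payoff to CSPs. -/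
def linCSP {m n : ℕ} (u : Fin m → Fin n → ℝ) (φ : Fin m × Fin n → ℝ) : ℝ :=
  ∑ p : Fin m × Fin n, φ p * u p.1 p.2

/-- Payoff the learner would get by always deviating to the pure action `j'`. -/
def devCSP {m n : ℕ} (u : Fin m → Fin n → ℝ) (φ : Fin m × Fin n → ℝ) (j' : Fin n) : ℝ :=
  ∑ p : Fin m × Fin n, φ p * u p.1 j'

/-- Bilinear extension of a payoff to mixed strategies. -/
def mixPay {m n : ℕ} (u : Fin m → Fin n → ℝ) (x : Fin m → ℝ) (y : Fin n → ℝ) : ℝ :=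
  ∑ i, ∑ j, x i * y j * u i j

/-- Pure best responses of the learner to the optimizer mixed strategy `x`. -/
def BRL {m n : ℕ} (u : Fin m → Fin n → ℝ) (x : Fin m → ℝ) : Set (Fin n) :=
  {j | ∀ j' : Fin n, (∑ i, x i * u i j') ≤ ∑ i, x i * u i j}

/-- A CSP is no-regret. -/
def NoRegret {m n : ℕ} (u : Fin m → Fin n → ℝ) (φ : Fin m × Fin n → ℝ) : Prop :=
  ∀ j' : Fin n, devCSP u φ j' ≤ linCSP u φ

/-- A CSP is no-swap-regret. -/
def NoSwapRegret {m n : ℕ} (u : Fin m → Fin n → ℝ) (φ : Fin m × Fin n → ℝ) : Prop :=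
  ∀ j j' : Fin n, (∑ i, φ (i, j) * u i j') ≤ ∑ i, φ (i, j) * u i j

/-- The no-regret menu: all no-regret CSPs. -/
def MNR {m n : ℕ} (u : Fin m → Fin n → ℝ) : Set (Fin m × Fin n → ℝ) :=
  {φ | φ ∈ stdSimplex ℝ (Fin m × Fin n) ∧ NoRegret u φ}

/-- The no-swap-regret menu: all no-swap-regret CSPs. -/
def MNSR {m n : ℕ} (u : Fin m → Fin n → ℝ) : Set (Fin m × Fin n → ℝ) :=
  {φ | φ ∈ stdSimplex ℝ (Fin m × Fin n) ∧ NoSwapRegret u φ}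

/-- A menu: a closed convex subset of the simplex of CSPs such that every optimizer
mixed strategy has some product response inside the set. -/
def IsMenu {m n : ℕ} (M : Set (Fin m × Fin n → ℝ)) : Prop :=
  IsClosed M ∧ Convex ℝ M ∧ M ⊆ stdSimplex ℝ (Fin m × Fin n) ∧
    ∀ x ∈ stdSimplex ℝ (Fin m), ∃ y ∈ stdSimplex ℝ (Fin n), prodCSP x y ∈ M

/-- The learner's value when the optimizer with payoff `uO` picks their favorite point
of the menu `M`, breaking ties in the learner's favor. -/
def VL {m n : ℕ} (uL uO : Fin m → Fin n → ℝ) (M : Set (Fin m × Fin n → ℝ)) : ℝ :=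
  sSup (linCSP uL '' {φ ∈ M | ∀ ψ ∈ M, linCSP uO ψ ≤ linCSP uO φ})

/-- `M'` Pareto-dominates `M` (for the learner payoff `uL`). -/
def ParetoDominates {m n : ℕ} (uL : Fin m → Fin n → ℝ)
    (M' M : Set (Fin m × Fin n → ℝ)) : Prop :=
  (∀ uO : Fin m → Fin n → ℝ, VL uL uO M ≤ VL uL uO M') ∧
    ∃ uO : Fin m → Fin n → ℝ, VL uL uO M < VL uL uO M'

/-- A menu is Pareto-optimal if it is a menu and no menu Pareto-dominates it. -/
def ParetoOptimal {m n : ℕ} (uL : Fin m → Fin n → ℝ) (M : Set (Fin m × Fin n → ℝ)) : Prop :=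
  IsMenu M ∧ ∀ M' : Set (Fin m × Fin n → ℝ), IsMenu M' → ¬ ParetoDominates uL M' M

/-- (A2): no weakly dominated learner actions. -/
def A2cond {m n : ℕ} (u : Fin m → Fin n → ℝ) : Prop :=
  ∀ j : Fin n, (∃ x ∈ stdSimplex ℝ (Fin m), j ∈ BRL u x) →
    ∃ x' ∈ stdSimplex ℝ (Fin m), BRL u x' = {j}

/-- `U^-(M)`: the minimal learner utility over `M`. -/
def UminusVal {m n : ℕ} (u : Fin m → Fin n → ℝ) (M : Set (Fin m × Fin n → ℝ)) : ℝ :=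
  sInf (linCSP u '' M)

/-- `U^+(M)`: the maximal learner utility over `M`. -/
def UplusVal {m n : ℕ} (u : Fin m → Fin n → ℝ) (M : Set (Fin m × Fin n → ℝ)) : ℝ :=
  sSup (linCSP u '' M)

/-- `M^-`: the set of learner-utility-minimizing points of `M`. -/
def MminusSet {m n : ℕ} (u : Fin m → Fin n → ℝ) (M : Set (Fin m × Fin n → ℝ)) :
    Set (Fin m × Fin n → ℝ) :=
  {φ ∈ M | linCSP u φ = UminusVal u M}

/-- `M^+`: the set of learner-utility-maximizing points of `M`. -/
def MplusSet {m n : ℕ} (u : Fin m → Fin n → ℝ) (M : Set (Fin m × Fin n → ℝ)) :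
    Set (Fin m × Fin n → ℝ) :=
  {φ ∈ M | linCSP u φ = UplusVal u M}

/-- The zero-sum value `U_ZS = min_x max_y u_L(x,y)`. -/
def UZSval {m n : ℕ} (u : Fin m → Fin n → ℝ) : ℝ :=
  sInf ((fun x => sSup ((fun y => mixPay u x y) '' stdSimplex ℝ (Fin n))) ''
    stdSimplex ℝ (Fin m))

/-! ### Auxiliary development -/

namespace PO

variable {m n : ℕ}

/-- Mix of two payoffs. -/
def pmix (s : ℝ) (a : Fin m → Fin n → ℝ) (t : ℝ) (b : Fin m → Fin n → ℝ) :
    Fin m → Fin n → ℝ := fun i j => s * a i j + t * b i j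

lemma linCSP_pmix (s : ℝ) (a : Fin m → Fin n → ℝ) (t : ℝ) (b : Fin m → Fin n → ℝ)
    (φ : Fin m × Fin n → ℝ) :
    linCSP (pmix s a t b) φ = s * linCSP a φ + t * linCSP b φ := by
  simp only [linCSP, pmix, Finset.mul_sum]
  rw [← Finset.sum_add_distrib]
  exact Finset.sum_congr rfl fun p _ => by ring

lemma linCSP_comb (c : Fin m → Fin n → ℝ) (s t : ℝ) (φ ψ : Fin m × Fin n → ℝ) :
    linCSP c (s • φ + t • ψ) = s * linCSP c φ + t * linCSP c ψ := by
  simp only [linCSP, Pi.add_apply, Pi.smul_apply, smul_eq_mul, Finset.mul_sum]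
  rw [← Finset.sum_add_distrib]
  exact Finset.sum_congr rfl fun p _ => by ring

lemma linCSP_sum (c : Fin m → Fin n → ℝ) (F : Finset (Fin m × Fin n → ℝ))
    (w : (Fin m × Fin n → ℝ) → ℝ) :
    linCSP c (∑ y ∈ F, w y • y) = ∑ y ∈ F, w y * linCSP c y := by
  simp only [linCSP, Finset.sum_apply, Pi.smul_apply, smul_eq_mul]
  calc ∑ p : Fin m × Fin n, (∑ y ∈ F, w y * y p) * c p.1 p.2
      = ∑ p : Fin m × Fin n, ∑ y ∈ F, w y * y p * c p.1 p.2 := by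
        exact Finset.sum_congr rfl fun p _ => Finset.sum_mul ..
    _ = ∑ y ∈ F, ∑ p : Fin m × Fin n, w y * y p * c p.1 p.2 := Finset.sum_comm
    _ = ∑ y ∈ F, w y * ∑ p : Fin m × Fin n, y p * c p.1 p.2 := by
        simp [Finset.mul_sum, mul_assoc]

lemma linCSP_cont (c : Fin m → Fin n → ℝ) : Continuous (linCSP c) :=
  continuous_finset_sum _ fun p _ => (continuous_apply p).mul continuous_const

/-- Argmax set of a payoff on a set. -/
def Amax (c : Fin m → Fin n → ℝ) (N : Set (Fin m × Fin n → ℝ)) : Set (Fin m × Fin n → ℝ) :=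
  {φ ∈ N | ∀ ψ ∈ N, linCSP c ψ ≤ linCSP c φ}

lemma VL_eq_amax (uL uO : Fin m → Fin n → ℝ) (N : Set (Fin m × Fin n → ℝ)) :
    VL uL uO N = sSup (linCSP uL '' Amax uO N) := rfl

/-- Support function value. -/
def hS (c : Fin m → Fin n → ℝ) (N : Set (Fin m × Fin n → ℝ)) : ℝ := sSup (linCSP c '' N)

section compact

variable {N : Set (Fin m × Fin n → ℝ)} (hNc : IsCompact N) (hNne : N.Nonempty)

include hNc hNne in
lemma exists_max (c : Fin m → Fin n → ℝ) :
    ∃ φ ∈ N, (∀ ψ ∈ N, linCSP c ψ ≤ linCSP c φ) ∧ linCSP c φ = hS c N := by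
  obtain ⟨φ, hφN, hmax⟩ := hNc.exists_isMaxOn hNne (linCSP_cont c).continuousOn
  rw [isMaxOn_iff] at hmax
  have hg : IsGreatest (linCSP c '' N) (linCSP c φ) :=
    ⟨⟨φ, hφN, rfl⟩, by rintro - ⟨ψ, hψ, rfl⟩; exact hmax ψ hψ⟩
  exact ⟨φ, hφN, hmax, hg.csSup_eq.symm⟩

include hNc in
lemma le_hS (c : Fin m → Fin n → ℝ) {φ : Fin m × Fin n → ℝ} (hφ : φ ∈ N) :
    linCSP c φ ≤ hS c N :=
  le_csSup (hNc.bddAbove_image (linCSP_cont c).continuousOn) ⟨φ, hφ, rfl⟩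

include hNc in
lemma sInf_le_mem (c : Fin m → Fin n → ℝ) {φ : Fin m × Fin n → ℝ} (hφ : φ ∈ N) :
    sInf (linCSP c '' N) ≤ linCSP c φ :=
  csInf_le (hNc.bddBelow_image (linCSP_cont c).continuousOn) ⟨φ, hφ, rfl⟩

include hNc hNne in
lemma exists_min (c : Fin m → Fin n → ℝ) :
    ∃ φ ∈ N, (∀ ψ ∈ N, linCSP c φ ≤ linCSP c ψ) ∧ linCSP c φ = sInf (linCSP c '' N) := by
  obtain ⟨φ, hφN, hmin⟩ := hNc.exists_isMinOn hNne (linCSP_cont c).continuousOn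
  rw [isMinOn_iff] at hmin
  have hg : IsLeast (linCSP c '' N) (linCSP c φ) :=
    ⟨⟨φ, hφN, rfl⟩, by rintro - ⟨ψ, hψ, rfl⟩; exact hmin ψ hψ⟩
  exact ⟨φ, hφN, hmin, hg.csInf_eq.symm⟩

include hNc in
lemma amax_isCompact (c : Fin m → Fin n → ℝ) : IsCompact (Amax c N) := by
  have hcl : IsClosed (Amax c N) := by
    have : Amax c N = N ∩ ⋂ ψ ∈ N, {φ | linCSP c ψ ≤ linCSP c φ} := by
      ext φ; simp [Amax, Set.mem_iInter]
    rw [this]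
    exact hNc.isClosed.inter (isClosed_biInter fun ψ _ =>
      isClosed_le continuous_const (linCSP_cont c))
  exact hNc.of_isClosed_subset hcl fun φ hφ => hφ.1

include hNc hNne in
lemma amax_nonempty (c : Fin m → Fin n → ℝ) : (Amax c N).Nonempty := by
  obtain ⟨φ, hφ, hmax, -⟩ := exists_max hNc hNne c
  exact ⟨φ, hφ, hmax⟩

include hNc hNne in
lemma VL_attained (uL c : Fin m → Fin n → ℝ) :
    ∃ φ ∈ Amax c N, linCSP uL φ = VL uL c N ∧ ∀ ψ ∈ Amax c N, linCSP uL ψ ≤ linCSP uL φ := by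
  obtain ⟨φ, hφ, hmax, heq⟩ := exists_max (amax_isCompact hNc c) (amax_nonempty hNc hNne c) uL
  exact ⟨φ, hφ, heq, hmax⟩

include hNc in
lemma le_VL (uL c : Fin m → Fin n → ℝ) {φ : Fin m × Fin n → ℝ} (hφ : φ ∈ Amax c N) :
    linCSP uL φ ≤ VL uL c N :=
  le_csSup (((amax_isCompact hNc c).bddAbove_image (linCSP_cont uL).continuousOn)) ⟨φ, hφ, rfl⟩

include hNc hNne in
lemma VL_le (uL c : Fin m → Fin n → ℝ) {b : ℝ} (hb : ∀ φ ∈ Amax c N, linCSP uL φ ≤ b) :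
    VL uL c N ≤ b := by
  refine csSup_le ?_ ?_
  · obtain ⟨φ, hφ⟩ := amax_nonempty hNc hNne c
    exact ⟨_, φ, hφ, rfl⟩
  · rintro - ⟨ψ, hψ, rfl⟩; exact hb ψ hψ

include hNc in
/-- Membership in the argmax set from attaining the sup. -/
lemma mem_amax_of_ge {c : Fin m → Fin n → ℝ} {φ : Fin m × Fin n → ℝ} (hφ : φ ∈ N)
    (h : hS c N ≤ linCSP c φ) : φ ∈ Amax c N :=
  ⟨hφ, fun ψ hψ => (le_hS hNc c hψ).trans h⟩

end compact


/-! ### Simplex and product facts -/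

lemma mem_simplex_iff {k : ℕ} {x : Fin k → ℝ} :
    x ∈ stdSimplex ℝ (Fin k) ↔ (∀ i, 0 ≤ x i) ∧ ∑ i, x i = 1 := Iff.rfl

lemma pureVec_mem {k : ℕ} (j : Fin k) : pureVec j ∈ stdSimplex ℝ (Fin k) := by
  constructor
  · intro i; unfold pureVec; split <;> norm_num
  · simp [pureVec]

lemma prod_mem_simplex {x : Fin m → ℝ} {y : Fin n → ℝ} (hx : x ∈ stdSimplex ℝ (Fin m))
    (hy : y ∈ stdSimplex ℝ (Fin n)) : prodCSP x y ∈ stdSimplex ℝ (Fin m × Fin n) := by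
  constructor
  · intro p; exact mul_nonneg (hx.1 _) (hy.1 _)
  · rw [Fintype.sum_prod_type]
    simp only [prodCSP, ← Finset.mul_sum]
    simp [hy.2, hx.2]

lemma dev_prod (u : Fin m → Fin n → ℝ) {x : Fin m → ℝ} {y : Fin n → ℝ}
    (hy : ∑ j, y j = 1) (j' : Fin n) :
    devCSP u (prodCSP x y) j' = ∑ i, x i * u i j' := by
  unfold devCSP prodCSP
  rw [Fintype.sum_prod_type]
  have : ∀ i, ∑ j, x i * y j * u i j' = x i * u i j' := by
    intro i
    rw [← Finset.sum_mul]
    rw [← Finset.mul_sum, hy]; ring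
  simp only [this]

lemma lin_prod (u : Fin m → Fin n → ℝ) (x : Fin m → ℝ) (y : Fin n → ℝ) :
    linCSP u (prodCSP x y) = ∑ j, y j * ∑ i, x i * u i j := by
  unfold linCSP prodCSP
  rw [Fintype.sum_prod_type, Finset.sum_comm]
  exact Finset.sum_congr rfl fun j _ => by rw [Finset.mul_sum]; exact Finset.sum_congr rfl fun i _ => by ring

lemma lin_prod_pure (u : Fin m → Fin n → ℝ) (x : Fin m → ℝ) (j0 : Fin n) :
    linCSP u (prodCSP x (pureVec j0)) = ∑ i, x i * u i j0 := by
  rw [lin_prod]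
  rw [Finset.sum_eq_single j0]
  · simp [pureVec]
  · intro b _ hb; simp [pureVec, hb]
  · simp

/-- The point mass CSP at `p0`. -/
def pureCSP (p0 : Fin m × Fin n) : Fin m × Fin n → ℝ := fun q => if q = p0 then 1 else 0

lemma prod_pure_pure (i0 : Fin m) (j0 : Fin n) :
    prodCSP (pureVec i0) (pureVec j0) = pureCSP (i0, j0) := by
  funext p
  simp only [prodCSP, pureVec, pureCSP, Prod.ext_iff]
  by_cases h1 : p.1 = i0 <;> by_cases h2 : p.2 = j0 <;> simp [h1, h2]

lemma pureCSP_mem (p0 : Fin m × Fin n) : pureCSP p0 ∈ stdSimplex ℝ (Fin m × Fin n) := by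
  constructor
  · intro q; unfold pureCSP; split <;> norm_num
  · simp [pureCSP]

lemma lin_pureCSP (u : Fin m → Fin n → ℝ) (p0 : Fin m × Fin n) :
    linCSP u (pureCSP p0) = u p0.1 p0.2 := by
  unfold linCSP pureCSP
  rw [Finset.sum_eq_single p0] <;> simp +contextual

/-! ### A1 facts -/

section A1

variable {uL : Fin m → Fin n → ℝ} {pstar : Fin m × Fin n}
  (hp : ∀ q : Fin m × Fin n, q ≠ pstar → uL q.1 q.2 < uL pstar.1 pstar.2)

lemma uL_le_pstar (q : Fin m × Fin n) (hq : ∀ q' ≠ pstar, uL q'.1 q'.2 ≤ uL pstar.1 pstar.2) :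
    uL q.1 q.2 ≤ uL pstar.1 pstar.2 := by
  by_cases h : q = pstar
  · subst h; exact le_rfl
  · exact hq q h

include hp in
lemma lin_le_uplus {φ : Fin m × Fin n → ℝ} (hφ : φ ∈ stdSimplex ℝ (Fin m × Fin n)) :
    linCSP uL φ ≤ uL pstar.1 pstar.2 := by
  calc linCSP uL φ = ∑ p : Fin m × Fin n, φ p * uL p.1 p.2 := rfl
    _ ≤ ∑ p : Fin m × Fin n, φ p * uL pstar.1 pstar.2 := by
        refine Finset.sum_le_sum fun p _ => mul_le_mul_of_nonneg_left ?_ (hφ.1 p)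
        by_cases h : p = pstar
        · subst h; exact le_rfl
        · exact (hp p h).le
    _ = uL pstar.1 pstar.2 := by rw [← Finset.sum_mul, hφ.2, one_mul]

include hp in
lemma eq_pure_of_max {φ : Fin m × Fin n → ℝ} (hφ : φ ∈ stdSimplex ℝ (Fin m × Fin n))
    (hval : linCSP uL φ = uL pstar.1 pstar.2) : φ = pureCSP pstar := by
  have hzero : ∀ p : Fin m × Fin n, p ≠ pstar → φ p = 0 := by
    have hsum : ∑ p : Fin m × Fin n, φ p * (uL pstar.1 pstar.2 - uL p.1 p.2) = 0 := by
      have : ∑ p : Fin m × Fin n, φ p * (uL pstar.1 pstar.2 - uL p.1 p.2)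
          = (∑ p : Fin m × Fin n, φ p) * uL pstar.1 pstar.2 - linCSP uL φ := by
        rw [Finset.sum_mul]; unfold linCSP; rw [← Finset.sum_sub_distrib]
        exact Finset.sum_congr rfl fun p _ => by ring
      rw [this, hφ.2, hval]; ring
    have hnn : ∀ p ∈ Finset.univ (α := Fin m × Fin n),
        0 ≤ φ p * (uL pstar.1 pstar.2 - uL p.1 p.2) := by
      intro p _
      refine mul_nonneg (hφ.1 p) ?_
      by_cases h : p = pstar
      · subst h; simp
      · linarith [hp p h]
    intro p hpne
    have := (Finset.sum_eq_zero_iff_of_nonneg hnn).1 hsum p (Finset.mem_univ p)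
    rcases mul_eq_zero.1 this with h | h
    · exact h
    · exfalso; have := hp p hpne; linarith
  funext q
  by_cases h : q = pstar
  · subst h
    have : ∑ p : Fin m × Fin n, φ p = φ q + ∑ p ∈ Finset.univ.erase q, φ p := by
      rw [Finset.add_sum_erase _ _ (Finset.mem_univ q)]
    have h2 : ∑ p ∈ Finset.univ.erase q, φ p = 0 :=
      Finset.sum_eq_zero fun p hp' => hzero p (Finset.ne_of_mem_erase hp')
    have h3 := hφ.2
    rw [this, h2] at h3
    simp [pureCSP]; linarith
  · simp [pureCSP, h, hzero q h]

end A1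
/-! ### BRL and MNSR facts -/

section NSR

variable {uL : Fin m → Fin n → ℝ}

lemma BRL_nonempty (hn : 0 < n) (x : Fin m → ℝ) : ∃ j, j ∈ BRL uL x := by
  obtain ⟨j, -, hj⟩ := Finset.exists_max_image Finset.univ (fun j => ∑ i, x i * uL i j)
    ⟨⟨0, hn⟩, Finset.mem_univ _⟩
  exact ⟨j, fun j' => hj j' (Finset.mem_univ _)⟩

lemma prod_pure_mem_MNSR {x : Fin m → ℝ} (hx : x ∈ stdSimplex ℝ (Fin m)) {j0 : Fin n}
    (hj : j0 ∈ BRL uL x) : prodCSP x (pureVec j0) ∈ MNSR uL := by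
  refine ⟨prod_mem_simplex hx (pureVec_mem j0), fun j j' => ?_⟩
  by_cases h : j = j0
  · have h1 : ∀ i, prodCSP x (pureVec j0) (i, j) = x i := by
      intro i; simp [prodCSP, pureVec, h]
    simp only [h1]
    rw [h]
    exact hj j'
  · have h1 : ∀ i, prodCSP x (pureVec j0) (i, j) = 0 := by
      intro i; simp [prodCSP, pureVec, h]
    simp [h1]

lemma MNSR_subset_simplex : MNSR uL ⊆ stdSimplex ℝ (Fin m × Fin n) := fun _ h => h.1

lemma MNSR_isClosed : IsClosed (MNSR uL) := by
  have : MNSR uL = stdSimplex ℝ (Fin m × Fin n) ∩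
      ⋂ j, ⋂ j', {φ : Fin m × Fin n → ℝ | ∑ i, φ (i, j) * uL i j' ≤ ∑ i, φ (i, j) * uL i j} := by
    ext φ; simp [MNSR, NoSwapRegret, Set.mem_iInter]
  rw [this]
  refine (isClosed_stdSimplex ℝ _).inter (isClosed_iInter fun j => isClosed_iInter fun j' => ?_)
  exact isClosed_le (continuous_finset_sum _ fun i _ => (continuous_apply (i, j)).mul continuous_const)
    (continuous_finset_sum _ fun i _ => (continuous_apply (i, j)).mul continuous_const)

lemma MNSR_convex : Convex ℝ (MNSR uL) := by
  intro φ hφ ψ hψ a b ha hb hab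
  refine ⟨(convex_stdSimplex ℝ _) hφ.1 hψ.1 ha hb hab, fun j j' => ?_⟩
  have h1 := hφ.2 j j'
  have h2 := hψ.2 j j'
  have e1 : ∀ c : Fin m → ℝ, ∑ i, (a • φ + b • ψ) (i, j) * c i
      = a * ∑ i, φ (i, j) * c i + b * ∑ i, ψ (i, j) * c i := by
    intro c
    simp only [Pi.add_apply, Pi.smul_apply, smul_eq_mul, Finset.mul_sum]
    rw [← Finset.sum_add_distrib]
    exact Finset.sum_congr rfl fun i _ => by ring
  rw [e1, e1]
  have := mul_le_mul_of_nonneg_left h1 ha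
  have := mul_le_mul_of_nonneg_left h2 hb
  linarith

lemma MNSR_isCompact : IsCompact (MNSR uL) :=
  (isCompact_stdSimplex ℝ _).of_isClosed_subset MNSR_isClosed MNSR_subset_simplex

lemma MNSR_isMenu (hn : 0 < n) : IsMenu (MNSR uL) := by
  refine ⟨MNSR_isClosed, MNSR_convex, MNSR_subset_simplex, fun x hx => ?_⟩
  obtain ⟨j, hj⟩ := BRL_nonempty (uL := uL) hn x
  exact ⟨pureVec j, pureVec_mem j, prod_pure_mem_MNSR hx hj⟩

/-- Key lemma: a product response of a no-regret menu at a strict best response is pure. -/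
lemma menu_resp_pure {N : Set (Fin m × Fin n → ℝ)} (hN : IsMenu N) (hNR : N ⊆ MNR uL)
    {x : Fin m → ℝ} (hx : x ∈ stdSimplex ℝ (Fin m)) {j0 : Fin n}
    (hstrict : ∀ j' : Fin n, j' ≠ j0 → (∑ i, x i * uL i j') < ∑ i, x i * uL i j0) :
    prodCSP x (pureVec j0) ∈ N := by
  obtain ⟨y, hy, hyN⟩ := hN.2.2.2 x hx
  have hmem := hNR hyN
  have hnr : NoRegret uL (prodCSP x y) := hmem.2
  set a : Fin n → ℝ := fun j => ∑ i, x i * uL i j with ha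
  have hdev : ∀ j', devCSP uL (prodCSP x y) j' = a j' := fun j' => dev_prod uL hy.2 j'
  have hlin : linCSP uL (prodCSP x y) = ∑ j, y j * a j := lin_prod uL x y
  have hle : ∑ j, y j * a j ≤ a j0 := by
    calc ∑ j, y j * a j ≤ ∑ j, y j * a j0 := by
          refine Finset.sum_le_sum fun j _ => mul_le_mul_of_nonneg_left ?_ (hy.1 j)
          by_cases h : j = j0
          · subst h; exact le_rfl
          · exact (hstrict j h).le
      _ = a j0 := by rw [← Finset.sum_mul, hy.2, one_mul]
  have hge : a j0 ≤ ∑ j, y j * a j := by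
    have := hnr j0
    rw [hdev, hlin] at this; exact this
  have hzero : ∀ j, j ≠ j0 → y j = 0 := by
    have hsum0 : ∑ j, y j * (a j0 - a j) = 0 := by
      have e1 : ∑ j, y j * (a j0 - a j) = (∑ j, y j * a j0) - ∑ j, y j * a j := by
        rw [← Finset.sum_sub_distrib]
        exact Finset.sum_congr rfl fun j _ => by ring
      have e2 : ∑ j, y j * a j0 = a j0 := by rw [← Finset.sum_mul, hy.2, one_mul]
      rw [e1, e2]; linarith
    intro j hj
    have hnn : ∀ j ∈ Finset.univ (α := Fin n), 0 ≤ y j * (a j0 - a j) := by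
      intro j _
      refine mul_nonneg (hy.1 j) ?_
      by_cases h : j = j0
      · subst h; simp
      · linarith [hstrict j h]
    have := (Finset.sum_eq_zero_iff_of_nonneg hnn).1 hsum0 j (Finset.mem_univ j)
    rcases mul_eq_zero.1 this with h | h
    · exact h
    · exfalso; have := hstrict j hj; linarith
  have hyeq : y = pureVec j0 := by
    funext j
    by_cases h : j = j0
    · subst h
      have h3 := hy.2
      have : ∑ j', y j' = y j + ∑ j' ∈ Finset.univ.erase j, y j' := by
        rw [Finset.add_sum_erase _ _ (Finset.mem_univ j)]
      have h2 : ∑ j' ∈ Finset.univ.erase j, y j' = 0 :=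
        Finset.sum_eq_zero fun j' hj' => hzero j' (Finset.ne_of_mem_erase hj')
      rw [this, h2] at h3
      simp [pureVec]; linarith
    · simp [pureVec, h, hzero j h]
  rw [hyeq] at hyN; exact hyN

/-- Minimality: any no-regret menu contains every pure best-response product. -/
lemma prod_pure_mem_menu (hA2 : A2cond uL) {N : Set (Fin m × Fin n → ℝ)} (hN : IsMenu N)
    (hNR : N ⊆ MNR uL) {x : Fin m → ℝ} (hx : x ∈ stdSimplex ℝ (Fin m)) {j0 : Fin n}
    (hj : j0 ∈ BRL uL x) : prodCSP x (pureVec j0) ∈ N := by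
  obtain ⟨x', hx', hBR⟩ := hA2 j0 ⟨x, hx, hj⟩
  have hjx' : j0 ∈ BRL uL x' := by rw [hBR]; rfl
  have hstr : ∀ j', j' ≠ j0 → (∑ i, x' i * uL i j') < ∑ i, x' i * uL i j0 := by
    intro j' hj'
    have hnot : j' ∉ BRL uL x' := by rw [hBR]; simpa using hj'
    simp only [BRL, Set.mem_setOf_eq, not_forall, not_le] at hnot
    obtain ⟨j1, hj1⟩ := hnot
    exact lt_of_lt_of_le hj1 (hjx' j1)
  set xt : ℝ → Fin m → ℝ := fun t i => (1 - t) * x' i + t * x i with hxt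
  have hmemt : ∀ t : ℝ, 0 ≤ t → t < 1 → prodCSP (xt t) (pureVec j0) ∈ N := by
    intro t ht0 ht1
    refine menu_resp_pure hN hNR ?_ ?_
    · constructor
      · intro i
        have := hx'.1 i; have := hx.1 i
        have h1 : (0:ℝ) ≤ 1 - t := by linarith
        positivity
      · simp only [hxt]
        rw [Finset.sum_add_distrib, ← Finset.mul_sum, ← Finset.mul_sum, hx.2, hx'.2]
        ring
    · intro j' hj'
      have e : ∀ c : Fin m → ℝ, ∑ i, xt t i * c i
          = (1 - t) * ∑ i, x' i * c i + t * ∑ i, x i * c i := by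
        intro c
        simp only [hxt, Finset.mul_sum]
        rw [← Finset.sum_add_distrib]
        exact Finset.sum_congr rfl fun i _ => by ring
      rw [e, e]
      have h1 : (0:ℝ) < 1 - t := by linarith
      have h2 := hstr j' hj'
      have h3 := hj j'
      nlinarith
  have hxt1 : xt 1 = x := by funext i; simp [hxt]
  have htends : Filter.Tendsto (fun k : ℕ => prodCSP (xt (1 - 1 / (k + 1))) (pureVec j0))
      Filter.atTop (nhds (prodCSP x (pureVec j0))) := by
    have ht : Filter.Tendsto (fun k : ℕ => 1 - 1 / ((k:ℝ) + 1)) Filter.atTop (nhds 1) := by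
      have := tendsto_one_div_add_atTop_nhds_zero_nat (𝕜 := ℝ)
      have := (tendsto_const_nhds (x := (1:ℝ)) (f := Filter.atTop (α := ℕ))).sub this
      simpa using this
    have hcont : Continuous (fun t : ℝ => prodCSP (xt t) (pureVec j0)) := by
      refine continuous_pi fun p => ?_
      unfold prodCSP
      fun_prop
    have := (hcont.tendsto 1).comp ht
    simpa [hxt1, Function.comp_def] using this
  refine hN.1.mem_of_tendsto htends ?_
  filter_upwards with k
  refine hmemt _ ?_ ?_
  · have h1 : 1 / ((k:ℝ) + 1) ≤ 1 := by
      rw [div_le_one (by positivity)]; linarith [Nat.cast_nonneg (α := ℝ) k]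
    linarith
  · have h1 : 0 < 1 / ((k:ℝ) + 1) := by positivity
    linarith

/-- Lemma A : every no-regret menu contains the no-swap-regret menu. -/
lemma MNSR_subset_menu (hm : 0 < m) (hA2 : A2cond uL) {N : Set (Fin m × Fin n → ℝ)}
    (hN : IsMenu N) (hNR : N ⊆ MNR uL) : MNSR uL ⊆ N := by
  have hNne : N.Nonempty := by
    have hx0 : pureVec (⟨0, hm⟩ : Fin m) ∈ stdSimplex ℝ (Fin m) := pureVec_mem _
    obtain ⟨y, -, hy⟩ := hN.2.2.2 _ hx0
    exact ⟨_, hy⟩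
  obtain ⟨ν₀, hν₀⟩ := hNne
  intro φ hφ
  set lam : Fin n → ℝ := fun j => ∑ i, φ (i, j) with hlam
  have hlam_nn : ∀ j, 0 ≤ lam j := fun j => Finset.sum_nonneg fun i _ => hφ.1.1 (i, j)
  have hlam_sum : ∑ j, lam j = 1 := by
    rw [hlam]
    rw [← hφ.1.2, Fintype.sum_prod_type_right]
  set z : Fin n → (Fin m × Fin n → ℝ) := fun j =>
    if h : 0 < lam j then prodCSP (fun i => φ (i, j) / lam j) (pureVec j) else ν₀ with hz
  have hzN : ∀ j, z j ∈ N := by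
    intro j
    show (if h : 0 < lam j then prodCSP (fun i => φ (i, j) / lam j) (pureVec j) else ν₀) ∈ N
    split
    case isTrue h =>
      have hxj : (fun i => φ (i, j) / lam j) ∈ stdSimplex ℝ (Fin m) := by
        constructor
        · intro i; exact div_nonneg (hφ.1.1 (i, j)) (hlam_nn j)
        · rw [← Finset.sum_div]
          show lam j / lam j = 1
          exact div_self h.ne' 
      have hbr : j ∈ BRL uL (fun i => φ (i, j) / lam j) := by
        intro j'
        have hcol := hφ.2 j j'
        have e : ∀ c : Fin m → ℝ, ∑ i, φ (i, j) / lam j * c i = (∑ i, φ (i, j) * c i) / lam j := by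
          intro c
          rw [Finset.sum_div]
          exact Finset.sum_congr rfl fun i _ => by ring
        rw [e, e]
        exact div_le_div_of_nonneg_right hcol h.le
      exact prod_pure_mem_menu hA2 hN hNR hxj hbr
    case isFalse h => exact hν₀
  have hrep : φ = ∑ j, lam j • z j := by
    funext p
    obtain ⟨i, j⟩ := p
    symm
    rw [Finset.sum_apply]
    rw [Finset.sum_eq_single j]
    · simp only [Pi.smul_apply, smul_eq_mul]
      show lam j * (if h : 0 < lam j then prodCSP (fun i => φ (i, j) / lam j) (pureVec j) else ν₀) (i, j) = φ (i, j)
      split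
      case isTrue h =>
        simp only [prodCSP, pureVec, if_pos rfl, mul_one, ↓reduceIte]
        field_simp
      case isFalse h =>
        have hl0 : lam j = 0 := le_antisymm (not_lt.1 h) (hlam_nn j)
        have hφ0 : φ (i, j) = 0 := by
          have hnn : ∀ i' ∈ Finset.univ (α := Fin m), 0 ≤ φ (i', j) := fun i' _ => hφ.1.1 _
          exact (Finset.sum_eq_zero_iff_of_nonneg hnn).1 hl0 i (Finset.mem_univ i)
        rw [hφ0, hl0]; ring
    · intro j' _ hj'
      simp only [Pi.smul_apply, smul_eq_mul]
      show lam j' * (if h : 0 < lam j' then prodCSP (fun i => φ (i, j') / lam j') (pureVec j') else ν₀) (i, j) = 0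
      split
      case isTrue h =>
        have : prodCSP (fun i => φ (i, j') / lam j') (pureVec j') (i, j) = 0 := by
          simp only [prodCSP, pureVec]
          rw [if_neg (Ne.symm hj')]; ring
        rw [this]; ring
      case isFalse h =>
        have hl0 : lam j' = 0 := le_antisymm (not_lt.1 h) (hlam_nn j')
        rw [hl0]; ring
    · simp
  rw [hrep]
  exact hN.2.1.sum_mem (fun j _ => hlam_nn j) hlam_sum (fun j _ => hzN j)

end NSR
/-! ### Support function along a line -/

lemma lin_line (uO d : Fin m → Fin n → ℝ) (t : ℝ) (φ : Fin m × Fin n → ℝ) :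
    linCSP (pmix 1 uO t d) φ = linCSP uO φ + t * linCSP d φ := by
  rw [linCSP_pmix]; ring

/-- `t ↦ h_N(uO + t d)`. -/
def fline (uO d : Fin m → Fin n → ℝ) (N : Set (Fin m × Fin n → ℝ)) (t : ℝ) : ℝ :=
  hS (pmix 1 uO t d) N

section line

variable {N : Set (Fin m × Fin n → ℝ)} (hNc : IsCompact N) (hNne : N.Nonempty)
  (uO d : Fin m → Fin n → ℝ)

include hNc hNne in
lemma amax_val {c : Fin m → Fin n → ℝ} {φ : Fin m × Fin n → ℝ} (hφ : φ ∈ Amax c N) :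
    linCSP c φ = hS c N := by
  refine le_antisymm (le_hS hNc c hφ.1) (csSup_le ⟨_, φ, hφ.1, rfl⟩ ?_)
  rintro - ⟨ψ, hψ, rfl⟩; exact hφ.2 ψ hψ

include hNc in
lemma fline_ge {φ : Fin m × Fin n → ℝ} (hφ : φ ∈ N) (t : ℝ) :
    linCSP uO φ + t * linCSP d φ ≤ fline uO d N t := by
  rw [← lin_line]; exact le_hS hNc _ hφ

include hNc hNne in
lemma fline_exists_max (t : ℝ) :
    ∃ φ ∈ N, linCSP uO φ + t * linCSP d φ = fline uO d N t := by
  obtain ⟨φ, hφ, -, heq⟩ := exists_max hNc hNne (pmix 1 uO t d)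
  exact ⟨φ, hφ, by rw [← lin_line]; exact heq⟩

include hNc hNne in
lemma fline_lower_right (b t : ℝ) (ht : 0 ≤ t) :
    fline uO d N b + t * VL d (pmix 1 uO b d) N ≤ fline uO d N (b + t) := by
  obtain ⟨φ, hφ, heq, -⟩ := VL_attained hNc hNne d (pmix 1 uO b d)
  have h1 : linCSP (pmix 1 uO b d) φ = fline uO d N b := amax_val hNc hNne hφ
  have h2 := fline_ge hNc uO d hφ.1 (b + t)
  rw [lin_line] at h1
  rw [← heq]; nlinarith [h2]

include hNc hNne in
lemma fline_needL {a b s : ℝ} (hab : a ≤ b) (hs : 0 ≤ s) :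
    (fline uO d N b - fline uO d N a) * s ≤ (fline uO d N (b + s) - fline uO d N b) * (b - a) := by
  obtain ⟨φ, hφ, heq⟩ := fline_exists_max hNc hNne uO d b
  have h1 := fline_ge hNc uO d hφ a
  have h2 := fline_ge hNc uO d hφ (b + s)
  nlinarith [mul_le_mul_of_nonneg_right (sub_le_iff_le_add.2 (by nlinarith : fline uO d N b ≤ (b - a) * linCSP d φ + fline uO d N a)) hs, mul_le_mul_of_nonneg_left (by nlinarith : s * linCSP d φ ≤ fline uO d N (b + s) - fline uO d N b) (by linarith : (0:ℝ) ≤ b - a)]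

variable (hd : ∀ φ ∈ N, |linCSP d φ| ≤ 1)

include hNc hNne hd in
lemma fline_lip_up {s t : ℝ} (hst : s ≤ t) : fline uO d N t ≤ fline uO d N s + (t - s) := by
  obtain ⟨φ, hφ, heq⟩ := fline_exists_max hNc hNne uO d t
  have h1 := fline_ge hNc uO d hφ s
  have h2 := (abs_le.1 (hd φ hφ)).2
  nlinarith

include hNc hNne hd in
lemma fline_lip_down {s t : ℝ} (hst : s ≤ t) : fline uO d N s ≤ fline uO d N t + (t - s) := by
  obtain ⟨φ, hφ, heq⟩ := fline_exists_max hNc hNne uO d s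
  have h1 := fline_ge hNc uO d hφ t
  have h2 := (abs_le.1 (hd φ hφ)).1
  nlinarith

include hNc hNne hd in
lemma fline_claimS (b : ℝ) {ε : ℝ} (hε : 0 < ε) :
    ∃ s > 0, fline uO d N (b + s) ≤ fline uO d N b + s * (VL d (pmix 1 uO b d) N + ε) := by
  by_contra hcon
  push_neg at hcon
  set V := VL d (pmix 1 uO b d) N with hV
  set A : ℕ → Set (Fin m × Fin n → ℝ) := fun k =>
    {φ ∈ N | V + ε ≤ linCSP d φ ∧ fline uO d N b - 2 / (k + 1) ≤ linCSP (pmix 1 uO b d) φ} with hA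
  have hVlb : -1 ≤ V := by
    obtain ⟨φ, hφ, heq, -⟩ := VL_attained hNc hNne d (pmix 1 uO b d)
    rw [hV, ← heq]; exact (abs_le.1 (hd φ hφ.1)).1
  have hAne : ∀ k : ℕ, (A k).Nonempty := by
    intro k
    have hsk : (0:ℝ) < 1 / (k + 1) := by positivity
    obtain ⟨φ, hφ, heq⟩ := fline_exists_max hNc hNne uO d (b + 1 / (k + 1))
    have hgt := hcon (1 / (k + 1)) hsk
    have hbd := (abs_le.1 (hd φ hφ)).2
    have hble := fline_ge hNc uO d hφ b
    have hdφ : V + ε ≤ linCSP d φ := by nlinarith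
    refine ⟨φ, hφ, hdφ, ?_⟩
    rw [lin_line]
    have h2s : 2 / ((k:ℝ) + 1) = 2 * (1 / ((k:ℝ) + 1)) := by ring
    nlinarith [mul_le_mul_of_nonneg_left hbd hsk.le,
      mul_le_mul_of_nonneg_left (by linarith : (-1:ℝ) ≤ V + ε) hsk.le]
  have hAeq : ∀ k : ℕ, A k = N ∩ ({φ | V + ε ≤ linCSP d φ} ∩
      {φ | fline uO d N b - 2 / (k + 1) ≤ linCSP (pmix 1 uO b d) φ}) := by
    intro k; ext φ
    simp only [hA, Set.mem_setOf_eq, Set.mem_inter_iff, and_assoc]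
  have hAcl : ∀ k : ℕ, IsClosed (A k) := by
    intro k
    rw [hAeq k]
    exact hNc.isClosed.inter ((isClosed_le continuous_const (linCSP_cont d)).inter
      (isClosed_le continuous_const (linCSP_cont (pmix 1 uO b d))))
  have hAcomp : ∀ k : ℕ, IsCompact (A k) := fun k =>
    hNc.of_isClosed_subset (hAcl k) (fun φ hφ => hφ.1)
  have hAmono : ∀ k l : ℕ, k ≤ l → A l ⊆ A k := by
    intro k l hkl φ hφ
    refine ⟨hφ.1, hφ.2.1, le_trans (by
      have h1 : (k:ℝ) + 1 ≤ (l:ℝ) + 1 := by exact_mod_cast by omega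
      have h2 : (0:ℝ) < (k:ℝ) + 1 := by positivity
      have := div_le_div_of_nonneg_left (by norm_num : (0:ℝ) ≤ 2) h2 h1
      linarith) hφ.2.2⟩
  have hdir : Directed (fun x1 x2 : Set (Fin m × Fin n → ℝ) => x1 ⊇ x2) A := by
    intro k l
    exact ⟨max k l, hAmono k _ (le_max_left k l), hAmono l _ (le_max_right k l)⟩
  obtain ⟨φ, hφ⟩ := IsCompact.nonempty_iInter_of_directed_nonempty_isCompact_isClosed
    A hdir hAne hAcomp hAcl
  simp only [Set.mem_iInter] at hφ
  have hφN : φ ∈ N := (hφ 0).1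
  have hφd : V + ε ≤ linCSP d φ := (hφ 0).2.1
  have hφb : fline uO d N b ≤ linCSP (pmix 1 uO b d) φ := by
    by_contra hlt
    push_neg at hlt
    set γ := fline uO d N b - linCSP (pmix 1 uO b d) φ with hγ
    have hγpos : 0 < γ := by simp [hγ]; linarith
    obtain ⟨k, hk⟩ := exists_nat_gt (2 / γ)
    have hk1 : 2 / γ < (k:ℝ) + 1 := by linarith [Nat.cast_nonneg (α := ℝ) k]
    have h2 : 2 / ((k:ℝ) + 1) < γ := by
      rw [div_lt_iff₀ (by positivity)]
      rw [div_lt_iff₀ hγpos] at hk1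
      linarith
    have := (hφ k).2.2
    simp only [hγ] at h2
    linarith
  have hmem : φ ∈ Amax (pmix 1 uO b d) N := mem_amax_of_ge hNc hφN hφb
  have := le_VL hNc d (pmix 1 uO b d) hmem
  rw [← hV] at this
  linarith

include hNc hNne hd in
lemma fline_leftinc {a b : ℝ} (hab : a ≤ b) :
    fline uO d N b - fline uO d N a ≤ (b - a) * VL d (pmix 1 uO b d) N := by
  rcases eq_or_lt_of_le hab with rfl | hlt
  · simp
  have key : ∀ ε > 0, fline uO d N b - fline uO d N a ≤ (b - a) * (VL d (pmix 1 uO b d) N + ε) := by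
    intro ε hε
    obtain ⟨s, hs, hsle⟩ := fline_claimS hNc hNne uO d hd b hε
    have hneed := fline_needL hNc hNne uO d hab hs.le
    have h2 : (fline uO d N (b + s) - fline uO d N b) * (b - a)
        ≤ s * (VL d (pmix 1 uO b d) N + ε) * (b - a) := by
      have := sub_le_iff_le_add.2 hsle
      exact mul_le_mul_of_nonneg_right (by linarith) (by linarith)
    have h3 := hneed.trans h2
    have := (mul_le_mul_iff_of_pos_right hs).1 (by nlinarith : (fline uO d N b - fline uO d N a) * s
      ≤ ((b - a) * (VL d (pmix 1 uO b d) N + ε)) * s)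
    linarith
  by_contra hcon
  push_neg at hcon
  set δ := fline uO d N b - fline uO d N a - (b - a) * VL d (pmix 1 uO b d) N with hδ
  have hδpos : 0 < δ := by simp only [hδ]; linarith
  have hba : 0 < b - a := by linarith
  have hkey := key (δ / (2 * (b - a))) (div_pos hδpos (by linarith))
  have hfin : fline uO d N b - fline uO d N a ≤ (b - a) * VL d (pmix 1 uO b d) N + δ / 2 := by
    have e : (b - a) * (δ / (2 * (b - a))) = δ / 2 := by field_simp
    calc fline uO d N b - fline uO d N a
        ≤ (b - a) * (VL d (pmix 1 uO b d) N + δ / (2 * (b - a))) := hkey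
      _ = (b - a) * VL d (pmix 1 uO b d) N + (b - a) * (δ / (2 * (b - a))) := by ring
      _ = (b - a) * VL d (pmix 1 uO b d) N + δ / 2 := by rw [e]
  simp only [hδ] at hδpos hfin
  linarith

end line

/-! ### Increment comparison and asymptotics -/

section increment

variable {M M' : Set (Fin m × Fin n → ℝ)} (hMc : IsCompact M) (hMne : M.Nonempty)
  (hM'c : IsCompact M') (hM'ne : M'.Nonempty) (uO d : Fin m → Fin n → ℝ)
  (hdM : ∀ φ ∈ M, |linCSP d φ| ≤ 1) (hdM' : ∀ φ ∈ M', |linCSP d φ| ≤ 1)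
  (dom : ∀ c : Fin m → Fin n → ℝ, VL d c M ≤ VL d c M')

include hMc hMne hM'c hM'ne hdM dom in
lemma fline_step (x Δ : ℝ) (hΔ : 0 ≤ Δ) :
    fline uO d M (x + Δ) - fline uO d M x ≤ fline uO d M' (x + 2 * Δ) - fline uO d M' (x + Δ) := by
  have h1 := fline_leftinc hMc hMne uO d hdM (by linarith : x ≤ x + Δ)
  have h2 : (x + Δ - x) * VL d (pmix 1 uO (x + Δ) d) M
      ≤ Δ * VL d (pmix 1 uO (x + Δ) d) M' := by
    have := dom (pmix 1 uO (x + Δ) d)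
    have e : x + Δ - x = Δ := by ring
    rw [e]
    exact mul_le_mul_of_nonneg_left this hΔ
  have h3 := fline_lower_right hM'c hM'ne uO d (x + Δ) Δ hΔ
  have e2 : x + Δ + Δ = x + 2 * Δ := by ring
  rw [e2] at h3
  linarith

include hMc hMne hM'c hM'ne hdM dom in
lemma fline_induct (Δ : ℝ) (hΔ : 0 ≤ Δ) : ∀ k : ℕ,
    fline uO d M (k * Δ) - fline uO d M 0 ≤ fline uO d M' ((k + 1) * Δ) - fline uO d M' Δ := by
  intro k
  induction k with
  | zero => simp
  | succ k ih =>
    have hstep := fline_step hMc hMne hM'c hM'ne uO d hdM dom (k * Δ) Δ hΔ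
    have e1 : (k : ℝ) * Δ + Δ = ((k + 1 : ℕ) : ℝ) * Δ := by push_cast; ring
    have e2 : (k : ℝ) * Δ + 2 * Δ = (((k + 1 : ℕ) : ℝ) + 1) * Δ := by push_cast; ring
    have e3 : ((k : ℝ) + 1) * Δ = ((k + 1 : ℕ) : ℝ) * Δ := by push_cast; ring
    rw [e1, e2] at hstep
    rw [e3] at ih
    linarith

include hMc hMne hM'c hM'ne hdM hdM' dom in
lemma fline_incr2 {a b : ℝ} (hab : a ≤ b) :
    fline uO d M b - fline uO d M a ≤ fline uO d M' b - fline uO d M' a := by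
  -- reduce to base at a
  have key : ∀ (w : Fin m → Fin n → ℝ) (T : ℝ), 0 ≤ T →
      fline w d M T - fline w d M 0 ≤ fline w d M' T - fline w d M' 0 := by
    intro w T hT
    rcases eq_or_lt_of_le hT with rfl | hTpos
    · simp
    by_contra hcon
    push_neg at hcon
    set γ := (fline w d M T - fline w d M 0) - (fline w d M' T - fline w d M' 0) with hγ
    have hγpos : 0 < γ := by simp only [hγ]; linarith
    obtain ⟨k, hk⟩ := exists_nat_gt (2 * T / γ)
    have hk0 : 0 < (k : ℝ) := lt_of_le_of_lt (by positivity) hk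
    set Δ := T / k with hΔdef
    have hΔpos : 0 < Δ := div_pos hTpos hk0
    have hkΔ : (k : ℝ) * Δ = T := by rw [hΔdef]; field_simp
    have hind := fline_induct hMc hMne hM'c hM'ne w d hdM dom Δ hΔpos.le k
    rw [hkΔ] at hind
    have e4 : ((k : ℝ) + 1) * Δ = T + Δ := by rw [add_mul, hkΔ, one_mul]
    rw [e4] at hind
    have hup := fline_lip_up hM'c hM'ne w d hdM' (by linarith : T ≤ T + Δ)
    have hdown := fline_lip_down hM'c hM'ne w d hdM' (by linarith : (0:ℝ) ≤ Δ)
    have h2Δ : 2 * Δ < γ := by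
      rw [hΔdef]
      rw [div_lt_iff₀ hγpos] at hk
      have e : 2 * (T / (k:ℝ)) = 2 * T / (k:ℝ) := by ring
      rw [e, div_lt_iff₀ hk0]
      linarith
    simp only [hγ] at hγpos
    linarith
  -- now shift the base point
  have hshift : ∀ (N : Set (Fin m × Fin n → ℝ)) (t : ℝ),
      fline (pmix 1 uO a d) d N t = fline uO d N (a + t) := by
    intro N t
    unfold fline
    congr 1
    funext i j
    simp only [pmix]; ring
  have := key (pmix 1 uO a d) (b - a) (by linarith)
  rw [hshift M, hshift M', hshift M, hshift M'] at this
  simp only [add_zero, add_sub_cancel] at this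
  linarith

end increment

section asymptotic

variable {N : Set (Fin m × Fin n → ℝ)} (hNc : IsCompact N) (hNne : N.Nonempty)
  (uO d : Fin m → Fin n → ℝ)

include hNc hNne in
lemma fline_asym_lower (t : ℝ) :
    t * hS d N + hS uO (Amax d N) ≤ fline uO d N t := by
  obtain ⟨ψ, hψ, -, heq2⟩ := exists_max (amax_isCompact hNc d) (amax_nonempty hNc hNne d) uO
  have hdval : linCSP d ψ = hS d N := amax_val hNc hNne hψ
  have := fline_ge hNc uO d hψ.1 t
  rw [hdval, heq2] at this
  linarith

include hNc hNne in
lemma fline_asym_upper {ε : ℝ} (hε : 0 < ε) :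
    ∃ K : ℕ, ∀ t : ℝ, (K : ℝ) ≤ t →
      fline uO d N t ≤ t * hS d N + hS uO (Amax d N) + ε := by
  set D := hS d N with hD
  set C := hS uO (Amax d N) with hC
  set A : ℕ → Set (Fin m × Fin n → ℝ) := fun k =>
    {φ ∈ N | C + ε ≤ linCSP uO φ + k * (linCSP d φ - D)} with hA
  by_cases hem : ∃ K : ℕ, A K = ∅
  · obtain ⟨K, hK⟩ := hem
    refine ⟨K, fun t ht => ?_⟩
    obtain ⟨φ, hφ, heq⟩ := fline_exists_max hNc hNne uO d t
    have hnot : φ ∉ A K := by rw [hK]; exact Set.notMem_empty φ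
    have hlt : linCSP uO φ + K * (linCSP d φ - D) < C + ε := by
      by_contra hge
      exact hnot ⟨hφ, by push_neg at hge; linarith⟩
    have hdle : linCSP d φ ≤ D := le_hS hNc d hφ
    have : (t : ℝ) * (linCSP d φ - D) ≤ (K : ℝ) * (linCSP d φ - D) :=
      mul_le_mul_of_nonpos_right ht (by linarith)
    nlinarith
  · exfalso
    push_neg at hem
    have hAne : ∀ k : ℕ, (A k).Nonempty := hem
    have hAeq : ∀ k : ℕ, A k = N ∩ {φ | C + ε ≤ linCSP uO φ + k * (linCSP d φ - D)} := by
      intro k; ext φ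
      simp only [hA, Set.mem_setOf_eq, Set.mem_inter_iff]
    have hAcl : ∀ k : ℕ, IsClosed (A k) := by
      intro k
      rw [hAeq k]
      refine hNc.isClosed.inter (isClosed_le continuous_const ?_)
      exact (linCSP_cont uO).add (continuous_const.mul ((linCSP_cont d).sub continuous_const))
    have hAcomp : ∀ k : ℕ, IsCompact (A k) := fun k =>
      hNc.of_isClosed_subset (hAcl k) (fun φ hφ => hφ.1)
    have hAmono : ∀ k l : ℕ, k ≤ l → A l ⊆ A k := by
      intro k l hkl φ hφ
      have hdle : linCSP d φ - D ≤ 0 := by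
        have := le_hS hNc d hφ.1; simp only [hD]; linarith
      refine ⟨hφ.1, le_trans hφ.2 ?_⟩
      have : (l : ℝ) * (linCSP d φ - D) ≤ (k : ℝ) * (linCSP d φ - D) :=
        mul_le_mul_of_nonpos_right (by exact_mod_cast hkl) hdle
      linarith
    have hdir : Directed (fun x1 x2 : Set (Fin m × Fin n → ℝ) => x1 ⊇ x2) A :=
      fun k l => ⟨max k l, hAmono k _ (le_max_left k l), hAmono l _ (le_max_right k l)⟩
    obtain ⟨φ, hφ⟩ := IsCompact.nonempty_iInter_of_directed_nonempty_isCompact_isClosed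
      A hdir hAne hAcomp hAcl
    simp only [Set.mem_iInter] at hφ
    have hφN : φ ∈ N := (hφ 0).1
    have hφ0 := (hφ 0).2
    simp only [Nat.cast_zero, zero_mul, add_zero] at hφ0
    have hdeq : linCSP d φ = D := by
      refine le_antisymm (le_hS hNc d hφN) ?_
      by_contra hlt
      push_neg at hlt
      obtain ⟨k, hk⟩ := exists_nat_gt ((linCSP uO φ - C - ε) / (D - linCSP d φ))
      have hpos : 0 < D - linCSP d φ := by linarith
      have := (hφ k).2
      rw [div_lt_iff₀ hpos] at hk
      nlinarith
    have hmem : φ ∈ Amax d N := mem_amax_of_ge hNc hφN (le_of_eq hdeq.symm)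
    have := le_hS (amax_isCompact hNc d) uO hmem
    rw [← hC] at this
    linarith

end asymptotic

/-! ### Glue lemmas -/

/-- Negation of a payoff. -/
def pneg (u : Fin m → Fin n → ℝ) : Fin m → Fin n → ℝ := fun i j => -(u i j)

lemma linCSP_pneg (u : Fin m → Fin n → ℝ) (φ : Fin m × Fin n → ℝ) :
    linCSP (pneg u) φ = -(linCSP u φ) := by
  unfold linCSP pneg
  rw [← Finset.sum_neg_distrib]
  exact Finset.sum_congr rfl fun p _ => by ring

lemma fline_neg_arg (uO d : Fin m → Fin n → ℝ) (N : Set (Fin m × Fin n → ℝ)) (t : ℝ) :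
    fline uO d N (-t) = fline uO (pneg d) N t := by
  unfold fline
  congr 1
  funext i j
  simp only [pmix, pneg]; ring

section glue

variable {uL : Fin m → Fin n → ℝ} {N : Set (Fin m × Fin n → ℝ)}
  (hNc : IsCompact N) (hNne : N.Nonempty)

include hNc hNne in
lemma hS_pneg_eq : hS (pneg uL) N = -(UminusVal uL N) := by
  obtain ⟨φ, hφ, hmin, heq⟩ := exists_min hNc hNne uL
  refine IsGreatest.csSup_eq ⟨⟨φ, hφ, by rw [linCSP_pneg, heq]; rfl⟩, ?_⟩
  rintro - ⟨ψ, hψ, rfl⟩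
  rw [linCSP_pneg]
  have := hmin ψ hψ
  rw [heq] at this
  show -(linCSP uL ψ) ≤ -sInf (linCSP uL '' N)
  linarith

include hNc in
lemma amax_pneg_eq : Amax (pneg uL) N = MminusSet uL N := by
  ext φ
  constructor
  · rintro ⟨hφ, hmax⟩
    refine ⟨hφ, le_antisymm ?_ (sInf_le_mem hNc uL hφ)⟩
    refine le_csInf ⟨_, φ, hφ, rfl⟩ ?_
    rintro - ⟨ψ, hψ, rfl⟩
    have := hmax ψ hψ
    rw [linCSP_pneg, linCSP_pneg] at this
    linarith
  · rintro ⟨hφ, hval⟩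
    refine ⟨hφ, fun ψ hψ => ?_⟩
    rw [linCSP_pneg, linCSP_pneg, hval]
    have := sInf_le_mem hNc uL hψ
    show -(linCSP uL ψ) ≤ -(UminusVal uL N)
    have e : UminusVal uL N = sInf (linCSP uL '' N) := rfl
    rw [e, hval] at *
    linarith

include hNc hNne in
lemma VL_pneg_eq : VL uL (pneg uL) N = UminusVal uL N := by
  rw [VL_eq_amax]
  obtain ⟨φ, hφ, hmin, heq⟩ := exists_min hNc hNne uL
  have hφm : φ ∈ Amax (pneg uL) N := by
    rw [amax_pneg_eq hNc]
    exact ⟨hφ, heq⟩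
  refine IsGreatest.csSup_eq ⟨⟨φ, hφm, heq⟩, ?_⟩
  rintro - ⟨ψ, hψ, rfl⟩
  rw [amax_pneg_eq hNc] at hψ
  exact le_of_eq hψ.2

end glue
/-! ### Separation and the backward direction -/

lemma sep_point {S : Set (Fin m × Fin n → ℝ)} (hconv : Convex ℝ S) (hcl : IsClosed S)
    {x : Fin m × Fin n → ℝ} (hx : x ∉ S) :
    ∃ (c : Fin m → Fin n → ℝ) (u : ℝ), (∀ a ∈ S, linCSP c a < u) ∧ u < linCSP c x := by
  obtain ⟨f, u, hfS, hfx⟩ := geometric_hahn_banach_closed_point hconv hcl hx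
  have key : ∀ ψ : Fin m × Fin n → ℝ,
      linCSP (fun i j => f (fun q => if q = (i, j) then 1 else 0)) ψ = f ψ := by
    intro ψ
    have hrep : ψ = ∑ p : Fin m × Fin n, ψ p • (fun q => if q = p then (1:ℝ) else 0) := by
      funext q
      rw [Finset.sum_apply]
      rw [Finset.sum_eq_single q] <;> simp +contextual [eq_comm]
    calc linCSP (fun i j => f (fun q => if q = (i, j) then 1 else 0)) ψ
        = ∑ p : Fin m × Fin n, ψ p * f (fun q => if q = p then 1 else 0) := by
          unfold linCSP; exact Finset.sum_congr rfl fun p _ => by simp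
      _ = f ψ := by
          conv_rhs => rw [hrep]
          rw [map_sum]
          exact Finset.sum_congr rfl fun p _ => by rw [map_smul]; simp
  exact ⟨_, u, fun a ha => by rw [key]; exact hfS a ha, by rw [key]; exact hfx⟩

lemma subset_of_hS_le {A B : Set (Fin m × Fin n → ℝ)} (hAc : IsCompact A)
    (hBconv : Convex ℝ B) (hBcl : IsClosed B) (hBne : B.Nonempty)
    (h : ∀ c : Fin m → Fin n → ℝ, hS c A ≤ hS c B) : A ⊆ B := by
  intro ψ hψ
  by_contra hns
  obtain ⟨c, u, hlt, hgt⟩ := sep_point hBconv hBcl hns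
  have h1 : linCSP c ψ ≤ hS c A := le_hS hAc c hψ
  have h2 : hS c B ≤ u :=
    csSup_le (hBne.image _) (by rintro - ⟨a, ha, rfl⟩; exact (hlt a ha).le)
  linarith [h c]

section main

variable {uL : Fin m → Fin n → ℝ} {pstar : Fin m × Fin n}

lemma sum_pure (i0 : Fin m) (c : Fin m → ℝ) : ∑ i, pureVec i0 i * c i = c i0 := by
  rw [Finset.sum_eq_single i0]
  · simp [pureVec]
  · intro b _ hb; simp [pureVec, hb]
  · simp

lemma pstar_BR (hp : ∀ q : Fin m × Fin n, q ≠ pstar → uL q.1 q.2 < uL pstar.1 pstar.2) :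
    pstar.2 ∈ BRL uL (pureVec pstar.1) := by
  intro j'
  rw [sum_pure, sum_pure]
  by_cases h : j' = pstar.2
  · rw [h]
  · exact le_of_lt (hp (pstar.1, j') (by simp [Prod.ext_iff, h]))

lemma pureCSP_mem_MNSR (hp : ∀ q : Fin m × Fin n, q ≠ pstar → uL q.1 q.2 < uL pstar.1 pstar.2) :
    pureCSP pstar ∈ MNSR uL := by
  rw [← prod_pure_pure]
  exact prod_pure_mem_MNSR (pureVec_mem _) (pstar_BR hp)

lemma menu_nonempty (hm : 0 < m) {N : Set (Fin m × Fin n → ℝ)} (hN : IsMenu N) : N.Nonempty := by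
  obtain ⟨y, -, hy⟩ := hN.2.2.2 _ (pureVec_mem (⟨0, hm⟩ : Fin m))
  exact ⟨_, hy⟩

lemma menu_compact {N : Set (Fin m × Fin n → ℝ)} (hN : IsMenu N) : IsCompact N :=
  (isCompact_stdSimplex ℝ _).of_isClosed_subset hN.1 hN.2.2.1

lemma uL_bound (hbound : ∀ i j, uL i j ∈ Set.Icc (-1 : ℝ) 1) {N : Set (Fin m × Fin n → ℝ)}
    (hNs : N ⊆ stdSimplex ℝ (Fin m × Fin n)) : ∀ φ ∈ N, |linCSP uL φ| ≤ 1 := by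
  intro φ hφ
  have hφs := hNs hφ
  calc |linCSP uL φ| ≤ ∑ p : Fin m × Fin n, |φ p * uL p.1 p.2| := Finset.abs_sum_le_sum_abs _ _
    _ ≤ ∑ p : Fin m × Fin n, φ p := by
        refine Finset.sum_le_sum fun p _ => ?_
        rw [abs_mul, abs_of_nonneg (hφs.1 p)]
        have h1 := (hbound p.1 p.2).1
        have h2 := (hbound p.1 p.2).2
        have : |uL p.1 p.2| ≤ 1 := abs_le.2 ⟨h1, h2⟩
        nlinarith [hφs.1 p, abs_nonneg (uL p.1 p.2)]
    _ = 1 := hφs.2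

lemma pmix_zero (uO d : Fin m → Fin n → ℝ) : pmix 1 uO 0 d = uO := by
  funext i j; simp [pmix]

lemma fline_zero (uO d : Fin m → Fin n → ℝ) (N : Set (Fin m × Fin n → ℝ)) :
    fline uO d N 0 = hS uO N := by
  unfold fline; rw [pmix_zero]

variable (hp : ∀ q : Fin m × Fin n, q ≠ pstar → uL q.1 q.2 < uL pstar.1 pstar.2)

include hp in
lemma hS_uL_eq {N : Set (Fin m × Fin n → ℝ)} (hNc : IsCompact N)
    (hNs : N ⊆ stdSimplex ℝ (Fin m × Fin n)) (hmem : pureCSP pstar ∈ N) :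
    hS uL N = uL pstar.1 pstar.2 := by
  refine le_antisymm (csSup_le ⟨_, _, hmem, rfl⟩ ?_) ?_
  · rintro - ⟨ψ, hψ, rfl⟩; exact lin_le_uplus hp (hNs hψ)
  · have := le_hS hNc uL hmem
    rwa [lin_pureCSP] at this

include hp in
lemma amax_top_eq {N : Set (Fin m × Fin n → ℝ)} (hNc : IsCompact N) (hNne : N.Nonempty)
    (hNs : N ⊆ stdSimplex ℝ (Fin m × Fin n)) (htop : hS uL N = uL pstar.1 pstar.2) :
    Amax uL N = {pureCSP pstar} := by
  have hfwd : ∀ φ ∈ Amax uL N, φ = pureCSP pstar := by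
    intro φ hφ
    have := amax_val hNc hNne hφ
    rw [htop] at this
    exact eq_pure_of_max hp (hNs hφ.1) this
  obtain ⟨ψ, hψ⟩ := amax_nonempty hNc hNne uL
  have hψeq := hfwd ψ hψ
  ext φ
  constructor
  · intro hφ; exact hfwd φ hφ
  · intro hφ
    rw [Set.mem_singleton_iff] at hφ
    rw [hφ, ← hψeq]
    exact hψ

lemma hS_singleton (c : Fin m → Fin n → ℝ) (x : Fin m × Fin n → ℝ) :
    hS c {x} = linCSP c x := by
  unfold hS
  rw [Set.image_singleton, csSup_singleton]

include hp in
/-- Backward direction: if the minimizing sets agree, the menu is Pareto-optimal. -/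
theorem pareto_of_minus_eq (hm : 0 < m)
    (hbound : ∀ i j, uL i j ∈ Set.Icc (-1 : ℝ) 1) (hA2 : A2cond uL)
    {M : Set (Fin m × Fin n → ℝ)} (hM : IsMenu M) (hsub : M ⊆ MNR uL)
    (hmin : MminusSet uL M = MminusSet uL (MNSR uL)) : ParetoOptimal uL M := by
  refine ⟨hM, fun M' hM' hdom => ?_⟩
  obtain ⟨dompart, uOs, hstrict⟩ := hdom
  have hMc := menu_compact hM
  have hM'c := menu_compact hM'
  have hMne := menu_nonempty hm hM
  have hM'ne := menu_nonempty hm hM'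
  have hMs := hM.2.2.1
  have hM's := hM'.2.2.1
  have hbM := uL_bound hbound hMs
  have hbM' := uL_bound hbound hM's
  have hNSRM : MNSR uL ⊆ M := MNSR_subset_menu hm hA2 hM hsub
  have hφpNSR : pureCSP pstar ∈ MNSR uL := pureCSP_mem_MNSR hp
  have hφpM : pureCSP pstar ∈ M := hNSRM hφpNSR
  set uplus := uL pstar.1 pstar.2 with huplus
  -- Step 4a : top value of M
  have htopM : hS uL M = uplus := hS_uL_eq hp hMc hMs hφpM
  -- Step 4b : top value of M'
  have htopM' : hS uL M' = uplus := by
    refine le_antisymm (csSup_le (hM'ne.image _) ?_) ?_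
    · rintro - ⟨ψ, hψ, rfl⟩; exact lin_le_uplus hp (hM's hψ)
    · by_contra hlt
      push_neg at hlt
      set ρ := uplus - hS uL M' with hρ
      have hρpos : 0 < ρ := by simp only [hρ]; linarith
      set w : Fin m → Fin n → ℝ := fun _ _ => 0 with hw
      have hconst : ∀ T : ℝ, 0 ≤ T → T * ρ ≤ hS w M' - fline w uL M' 0
          - (hS w (Amax uL M) - fline w uL M 0) := by
        intro T hT
        have hincr := fline_incr2 hMc hMne hM'c hM'ne w uL hbM hbM' dompart
          (by exact hT : (0:ℝ) ≤ T)
        have hlo := fline_asym_lower hMc hMne w uL T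
        have hup : fline w uL M' T ≤ hS w M' + T * hS uL M' := by
          obtain ⟨φ, hφ, heq⟩ := fline_exists_max hM'c hM'ne w uL T
          have h1 := le_hS hM'c w hφ
          have h2 := le_hS hM'c uL hφ
          nlinarith
        rw [htopM] at hlo
        simp only [hρ]
        nlinarith
      obtain ⟨k, hk⟩ := exists_nat_gt ((hS w M' - fline w uL M' 0
          - (hS w (Amax uL M) - fline w uL M 0)) / ρ)
      have := hconst k (Nat.cast_nonneg k)
      rw [div_lt_iff₀ hρpos] at hk
      nlinarith
  -- Step 4c/4d : the argmax sets are the single point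
  have hamaxM : Amax uL M = {pureCSP pstar} := amax_top_eq hp hMc hMne hMs htopM
  have hamaxM' : Amax uL M' = {pureCSP pstar} := amax_top_eq hp hM'c hM'ne hM's htopM'
  -- Step 5 : hS M' ≤ hS M
  have key1 : ∀ uO : Fin m → Fin n → ℝ, hS uO M' ≤ hS uO M := by
    intro uO
    refine le_of_forall_pos_le_add fun ε hε => ?_
    obtain ⟨K, hK⟩ := fline_asym_upper hM'c hM'ne uO uL hε
    set T : ℝ := max (K : ℝ) 0 with hT
    have hT0 : 0 ≤ T := le_max_right _ _
    have hTK : (K : ℝ) ≤ T := le_max_left _ _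
    have hincr := fline_incr2 hMc hMne hM'c hM'ne uO uL hbM hbM' dompart hT0
    have hupT := hK T hTK
    have hloT := fline_asym_lower hMc hMne uO uL T
    rw [htopM, hamaxM, hS_singleton] at hloT
    rw [htopM', hamaxM', hS_singleton] at hupT
    rw [fline_zero, fline_zero] at hincr
    linarith
  -- M' ⊆ M
  have hsubM : M' ⊆ M := subset_of_hS_le hM'c hM.2.1 hM.1 hMne key1
  -- NSR ⊆ M'
  have hNSRM' : MNSR uL ⊆ M' := MNSR_subset_menu hm hA2 hM' (hsubM.trans hsub)
  -- minimum values
  obtain ⟨φm, hφmM, hφmmin, hφmval⟩ := exists_min hMc hMne uL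
  have hφmMm : φm ∈ MminusSet uL M := ⟨hφmM, hφmval⟩
  have hφmNSRm : φm ∈ MminusSet uL (MNSR uL) := by rw [← hmin]; exact hφmMm
  have hUminEq : UminusVal uL M = UminusVal uL (MNSR uL) := by
    have e : UminusVal uL M = sInf (linCSP uL '' M) := rfl
    rw [e, ← hφmval, hφmNSRm.2]
  have hUminM'₁ : UminusVal uL M ≤ UminusVal uL M' := by
    have h1 := dompart (pneg uL)
    rwa [VL_pneg_eq hMc hMne, VL_pneg_eq hM'c hM'ne] at h1
  have hUminM'₂ : UminusVal uL M' ≤ UminusVal uL M := by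
    have := sInf_le_mem hM'c uL (hNSRM' hφmNSRm.1)
    rw [hφmNSRm.2, ← hUminEq] at this
    exact this
  have hUminM' : UminusVal uL M' = UminusVal uL M := le_antisymm hUminM'₂ hUminM'₁
  -- M⁻ ⊆ M'⁻
  have hminsub : MminusSet uL M ⊆ MminusSet uL M' := by
    intro φ hφ
    rw [hmin] at hφ
    refine ⟨hNSRM' hφ.1, ?_⟩
    rw [hφ.2, ← hUminEq, hUminM']
  -- Step 9 : hS M ≤ hS M'
  have key2 : ∀ uO : Fin m → Fin n → ℝ, hS uO M ≤ hS uO M' := by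
    intro uO
    refine le_of_forall_pos_le_add fun ε hε => ?_
    obtain ⟨K, hK⟩ := fline_asym_upper hMc hMne uO (pneg uL) hε
    set T : ℝ := max (K : ℝ) 0 with hT
    have hT0 : 0 ≤ T := le_max_right _ _
    have hTK : (K : ℝ) ≤ T := le_max_left _ _
    have hincr := fline_incr2 hMc hMne hM'c hM'ne (pmix 1 uO (-T) uL) uL hbM hbM' dompart hT0
    -- rewrite fline bases
    have hshift : ∀ (N : Set (Fin m × Fin n → ℝ)) (t : ℝ),
        fline (pmix 1 uO (-T) uL) uL N t = fline uO uL N (-T + t) := by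
      intro N t
      unfold fline
      congr 1
      funext i j
      simp only [pmix]; ring
    rw [hshift M, hshift M', hshift M, hshift M'] at hincr
    simp only [add_zero, neg_add_cancel] at hincr
    rw [fline_zero, fline_zero] at hincr
    have e1 : fline uO uL M (-T) = fline uO (pneg uL) M T := fline_neg_arg uO uL M T
    have e2 : fline uO uL M' (-T) = fline uO (pneg uL) M' T := fline_neg_arg uO uL M' T
    rw [e1, e2] at hincr
    have hupT := hK T hTK
    have hloT := fline_asym_lower hM'c hM'ne uO (pneg uL) T
    have hSneg : hS (pneg uL) M = hS (pneg uL) M' := by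
      rw [hS_pneg_eq hMc hMne, hS_pneg_eq hM'c hM'ne, hUminM']
    have hCle : hS uO (Amax (pneg uL) M) ≤ hS uO (Amax (pneg uL) M') := by
      rw [amax_pneg_eq hMc, amax_pneg_eq hM'c]
      refine csSup_le_csSup ?_ ?_ ?_
      · have hcomp : IsCompact (Amax (pneg uL) M') := amax_isCompact hM'c (pneg uL)
        rw [amax_pneg_eq hM'c] at hcomp
        exact hcomp.bddAbove_image (linCSP_cont uO).continuousOn
      · exact ⟨_, φm, hφmMm, rfl⟩
      · exact Set.image_mono hminsub
    rw [hSneg] at hupT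
    linarith
  have hMeq : M' = M := Set.Subset.antisymm hsubM
    (subset_of_hS_le hMc hM'.2.1 hM'.1 hM'ne key2)
  rw [hMeq] at hstrict
  exact lt_irrefl _ hstrict

end main
/-! ### Polytope tools for the forward direction -/

lemma convex_ge_half (c : Fin m → Fin n → ℝ) (b : ℝ) :
    Convex ℝ {φ : Fin m × Fin n → ℝ | b ≤ linCSP c φ} := by
  intro φ hφ ψ hψ s t hs ht hst
  simp only [Set.mem_setOf_eq] at *
  rw [linCSP_comb]
  have e : s * b + t * b = b := by rw [← add_mul, hst, one_mul]
  have h1 := mul_le_mul_of_nonneg_left hφ hs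
  have h2 := mul_le_mul_of_nonneg_left hψ ht
  linarith

lemma convex_gt_half (c : Fin m → Fin n → ℝ) (b : ℝ) :
    Convex ℝ {φ : Fin m × Fin n → ℝ | b < linCSP c φ} := by
  intro φ hφ ψ hψ s t hs ht hst
  simp only [Set.mem_setOf_eq] at *
  rw [linCSP_comb]
  have e : s * b + t * b = b := by rw [← add_mul, hst, one_mul]
  rcases eq_or_lt_of_le hs with rfl | hs'
  · have h2 := mul_le_mul_of_nonneg_left hψ.le ht
    have ht1 : t = 1 := by linarith
    rw [ht1] at *
    simp only [zero_mul, zero_add, one_mul] at *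
    linarith
  · have h1 := mul_lt_mul_of_pos_left hφ hs'
    have h2 := mul_le_mul_of_nonneg_left hψ.le ht
    linarith

lemma hS_le_of_subset {A B : Set (Fin m × Fin n → ℝ)} (hBc : IsCompact B) (hAne : A.Nonempty)
    (hAB : A ⊆ B) (c : Fin m → Fin n → ℝ) : hS c A ≤ hS c B :=
  csSup_le_csSup (hBc.bddAbove_image (linCSP_cont c).continuousOn) (hAne.image _)
    (Set.image_mono hAB)

lemma hull_le_level {F : Finset (Fin m × Fin n → ℝ)} {c : Fin m → Fin n → ℝ} {b : ℝ}
    (hb : ∀ w ∈ F, linCSP c w ≤ b) :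
    ∀ φ ∈ convexHull ℝ (F : Set (Fin m × Fin n → ℝ)), linCSP c φ ≤ b := by
  intro φ hφ
  rw [Finset.convexHull_eq] at hφ
  obtain ⟨w, hw0, hw1, rfl⟩ := hφ
  rw [Finset.centerMass_eq_of_sum_1 _ _ hw1]
  simp only [id_eq]
  rw [linCSP_sum]
  calc ∑ y ∈ F, w y * linCSP c y ≤ ∑ y ∈ F, w y * b := by
        exact Finset.sum_le_sum fun y hy => mul_le_mul_of_nonneg_left (hb y hy) (hw0 y hy)
    _ = b := by rw [← Finset.sum_mul, hw1, one_mul]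

lemma hull_ge_level {F : Finset (Fin m × Fin n → ℝ)} {c : Fin m → Fin n → ℝ} {b : ℝ}
    (hb : ∀ w ∈ F, b ≤ linCSP c w) :
    ∀ φ ∈ convexHull ℝ (F : Set (Fin m × Fin n → ℝ)), b ≤ linCSP c φ := by
  intro φ hφ
  rw [Finset.convexHull_eq] at hφ
  obtain ⟨w, hw0, hw1, rfl⟩ := hφ
  rw [Finset.centerMass_eq_of_sum_1 _ _ hw1]
  simp only [id_eq]
  rw [linCSP_sum]
  calc (b : ℝ) = ∑ y ∈ F, w y * b := by rw [← Finset.sum_mul, hw1, one_mul]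
    _ ≤ ∑ y ∈ F, w y * linCSP c y :=
        Finset.sum_le_sum fun y hy => mul_le_mul_of_nonneg_left (hb y hy) (hw0 y hy)

/-- If all generators are `≥ b` for `ℓ` and `ℓ φ = b`, then `φ` is in the hull of the
generators at level `b`. -/
lemma mem_hull_filter_min {F : Finset (Fin m × Fin n → ℝ)} {c : Fin m → Fin n → ℝ} {b : ℝ}
    (hb : ∀ w ∈ F, b ≤ linCSP c w) {φ : Fin m × Fin n → ℝ}
    (hφ : φ ∈ convexHull ℝ (F : Set (Fin m × Fin n → ℝ))) (hval : linCSP c φ = b) :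
    φ ∈ convexHull ℝ ((F.filter fun w => linCSP c w = b : Finset _) :
      Set (Fin m × Fin n → ℝ)) := by
  rw [Finset.convexHull_eq] at hφ
  obtain ⟨w, hw0, hw1, rfl⟩ := hφ
  rw [Finset.centerMass_eq_of_sum_1 _ _ hw1] at hval ⊢
  simp only [id_eq] at hval ⊢
  rw [linCSP_sum] at hval
  have hzero : ∀ y ∈ F, linCSP c y ≠ b → w y = 0 := by
    intro y hy hne
    have hsum0 : ∑ y ∈ F, w y * (linCSP c y - b) = 0 := by
      have e : ∑ y ∈ F, w y * (linCSP c y - b)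
          = (∑ y ∈ F, w y * linCSP c y) - ∑ y ∈ F, w y * b := by
        rw [← Finset.sum_sub_distrib]
        exact Finset.sum_congr rfl fun y _ => by ring
      rw [e, ← Finset.sum_mul, hw1, one_mul, hval]; ring
    have hnn : ∀ y ∈ F, 0 ≤ w y * (linCSP c y - b) := by
      intro y hy
      exact mul_nonneg (hw0 y hy) (by have := hb y hy; linarith)
    have := (Finset.sum_eq_zero_iff_of_nonneg hnn).1 hsum0 y hy
    rcases mul_eq_zero.1 this with h | h
    · exact h
    · exfalso
      have h1 := hb y hy
      exact hne (by linarith)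
  set F' := F.filter fun w => linCSP c w = b with hF'
  have hsum' : ∑ y ∈ F', w y = 1 := by
    rw [← hw1]
    refine Finset.sum_subset (Finset.filter_subset _ _) ?_
    intro y hy hny
    refine hzero y hy ?_
    intro hcon
    exact hny (Finset.mem_filter.2 ⟨hy, hcon⟩)
  have heq : ∑ y ∈ F, w y • y = ∑ y ∈ F', w y • y := by
    symm
    refine Finset.sum_subset (Finset.filter_subset _ _) ?_
    intro y hy hny
    have : w y = 0 := hzero y hy fun hcon => hny (Finset.mem_filter.2 ⟨hy, hcon⟩)
    rw [this, zero_smul]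
  rw [heq]
  have ecm : F'.centerMass w id = ∑ y ∈ F', w y • y := by
    rw [Finset.centerMass_eq_of_sum_1 _ _ hsum']
    simp only [id_eq]
  rw [← ecm]
  exact Finset.centerMass_mem_convexHull F' (fun y hy => hw0 y (Finset.mem_filter.1 hy).1)
    (by rw [hsum']; norm_num) (fun y hy => Finset.mem_coe.2 hy)

lemma mem_hull_filter_max {F : Finset (Fin m × Fin n → ℝ)} {c : Fin m → Fin n → ℝ} {b : ℝ}
    (hb : ∀ w ∈ F, linCSP c w ≤ b) {φ : Fin m × Fin n → ℝ}
    (hφ : φ ∈ convexHull ℝ (F : Set (Fin m × Fin n → ℝ))) (hval : linCSP c φ = b) :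
    φ ∈ convexHull ℝ ((F.filter fun w => linCSP c w = b : Finset _) :
      Set (Fin m × Fin n → ℝ)) := by
  have hb' : ∀ w ∈ F, -b ≤ linCSP (pneg c) w := by
    intro w hw; rw [linCSP_pneg]; linarith [hb w hw]
  have hval' : linCSP (pneg c) φ = -b := by rw [linCSP_pneg, hval]
  have := mem_hull_filter_min hb' hφ hval'
  have e : (F.filter fun w => linCSP (pneg c) w = -b) = F.filter fun w => linCSP c w = b := by
    refine Finset.filter_congr fun w hw => ?_
    rw [linCSP_pneg]
    constructor
    · intro h; linarith
    · intro h; rw [h]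
  rwa [e] at this

/-- the argmax set of a polytope is inside the hull of the argmax generators -/
lemma amax_mem_hull {F : Finset (Fin m × Fin n → ℝ)} {M : Set (Fin m × Fin n → ℝ)}
    (hF : M = convexHull ℝ (F : Set (Fin m × Fin n → ℝ))) (hMc : IsCompact M)
    (hMne : M.Nonempty) (c : Fin m → Fin n → ℝ) {φ : Fin m × Fin n → ℝ}
    (hφ : φ ∈ Amax c M) :
    φ ∈ convexHull ℝ ((F.filter fun w => linCSP c w = hS c M : Finset _) :
      Set (Fin m × Fin n → ℝ)) := by
  have hFM : (F : Set (Fin m × Fin n → ℝ)) ⊆ M := hF ▸ subset_convexHull ℝ _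
  refine mem_hull_filter_max (fun w hw => le_hS hMc c (hFM hw)) ?_ (amax_val hMc hMne hφ)
  rw [← hF]; exact hφ.1

lemma isCompact_convexJoin {s t : Set (Fin m × Fin n → ℝ)} (hs : IsCompact s)
    (ht : IsCompact t) : IsCompact (convexJoin ℝ s t) := by
  have heq : convexJoin ℝ s t = (fun z : ℝ × ((Fin m × Fin n → ℝ) × (Fin m × Fin n → ℝ)) =>
      z.2.1 + z.1 • (z.2.2 - z.2.1)) '' (Set.Icc (0:ℝ) 1 ×ˢ s ×ˢ t) := by
    ext x
    rw [mem_convexJoin]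
    constructor
    · rintro ⟨a, ha, b, hb, hseg⟩
      rw [segment_eq_image'] at hseg
      obtain ⟨θ, hθ, rfl⟩ := hseg
      exact ⟨(θ, a, b), ⟨hθ, ha, hb⟩, rfl⟩
    · rintro ⟨⟨θ, a, b⟩, ⟨hθ, ha, hb⟩, rfl⟩
      refine ⟨a, ha, b, hb, ?_⟩
      rw [segment_eq_image']
      exact ⟨θ, hθ, rfl⟩
  rw [heq]
  refine (IsCompact.prod isCompact_Icc (hs.prod ht)).image ?_
  exact (continuous_snd.fst).add ((continuous_fst).smul ((continuous_snd.snd).sub continuous_snd.fst))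

section minusfacts

variable {uL : Fin m → Fin n → ℝ}

lemma Mminus_convex {N : Set (Fin m × Fin n → ℝ)} (hNconv : Convex ℝ N) :
    Convex ℝ (MminusSet uL N) := by
  intro φ hφ ψ hψ s t hs ht hst
  refine ⟨hNconv hφ.1 hψ.1 hs ht hst, ?_⟩
  rw [linCSP_comb, hφ.2, hψ.2]
  rw [← add_mul, hst, one_mul]

lemma Mminus_closed {N : Set (Fin m × Fin n → ℝ)} (hNcl : IsClosed N) :
    IsClosed (MminusSet uL N) := by
  have : MminusSet uL N = N ∩ (linCSP uL) ⁻¹' {UminusVal uL N} := by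
    ext φ; simp [MminusSet, Set.mem_setOf_eq]
  rw [this]
  exact hNcl.inter ((isClosed_singleton).preimage (linCSP_cont uL))

lemma Mminus_compact {N : Set (Fin m × Fin n → ℝ)} (hNc : IsCompact N) (hNcl : IsClosed N) :
    IsCompact (MminusSet uL N) :=
  hNc.of_isClosed_subset (Mminus_closed hNcl) fun φ hφ => hφ.1

lemma Mminus_nonempty {N : Set (Fin m × Fin n → ℝ)} (hNc : IsCompact N) (hNne : N.Nonempty) :
    (MminusSet uL N).Nonempty := by
  obtain ⟨φ, hφ, -, heq⟩ := exists_min hNc hNne uL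
  exact ⟨φ, hφ, heq⟩

lemma Umin_le_mem {N : Set (Fin m × Fin n → ℝ)} (hNc : IsCompact N)
    {φ : Fin m × Fin n → ℝ} (hφ : φ ∈ N) : UminusVal uL N ≤ linCSP uL φ :=
  sInf_le_mem hNc uL hφ

lemma mem_Mminus_val {N : Set (Fin m × Fin n → ℝ)} {φ : Fin m × Fin n → ℝ}
    (hφ : φ ∈ MminusSet uL N) : linCSP uL φ = UminusVal uL N := hφ.2

end minusfacts
/-! ### Forward direction, case 1 -/

section case1

variable {uL : Fin m → Fin n → ℝ}

lemma MNSR_nonempty (hm : 0 < m) (hn : 0 < n) : (MNSR uL).Nonempty := by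
  obtain ⟨j, hj⟩ := BRL_nonempty (uL := uL) hn (pureVec (⟨0, hm⟩ : Fin m))
  exact ⟨_, prod_pure_mem_MNSR (pureVec_mem _) hj⟩

lemma dominated_case1 (hm : 0 < m) (hn : 0 < n) (hA2 : A2cond uL)
    {M : Set (Fin m × Fin n → ℝ)} (hM : IsMenu M) (hsub : M ⊆ MNR uL)
    (hlow : UminusVal uL M < UminusVal uL (MNSR uL)) :
    ∃ M', IsMenu M' ∧ ParetoDominates uL M' M := by
  set cm := UminusVal uL (MNSR uL) with hcm
  set M' := M ∩ {φ | cm ≤ linCSP uL φ} with hM'def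
  have hMc := menu_compact hM
  have hMne := menu_nonempty hm hM
  have hNSRM : MNSR uL ⊆ M := MNSR_subset_menu hm hA2 hM hsub
  have hNSRlb : ∀ φ ∈ MNSR uL, cm ≤ linCSP uL φ := fun φ hφ =>
    sInf_le_mem MNSR_isCompact uL hφ
  have hrespM' : ∀ x ∈ stdSimplex ℝ (Fin m), ∃ y ∈ stdSimplex ℝ (Fin n), prodCSP x y ∈ M' := by
    intro x hx
    obtain ⟨j, hj⟩ := BRL_nonempty (uL := uL) hn x
    have hmemNSR := prod_pure_mem_MNSR hx hj
    exact ⟨pureVec j, pureVec_mem j, hNSRM hmemNSR, hNSRlb _ hmemNSR⟩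
  have hM'cl : IsClosed M' := hM.1.inter (isClosed_le continuous_const (linCSP_cont uL))
  have hM'menu : IsMenu M' := by
    refine ⟨hM'cl, hM.2.1.inter (convex_ge_half uL cm), ?_, hrespM'⟩
    exact (Set.inter_subset_left).trans hM.2.2.1
  have hM'c : IsCompact M' := hMc.of_isClosed_subset hM'cl Set.inter_subset_left
  have hM'ne : M'.Nonempty := by
    obtain ⟨y, -, hy⟩ := hrespM' _ (pureVec_mem (⟨0, hm⟩ : Fin m))
    exact ⟨_, hy⟩
  have hM'lb : ∀ φ ∈ M', cm ≤ linCSP uL φ := fun φ hφ => hφ.2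
  refine ⟨M', hM'menu, ?_, pneg uL, ?_⟩
  · -- pointwise dominance
    intro uO
    obtain ⟨φv, hφv, hφvval, -⟩ := VL_attained hMc hMne uL uO
    by_cases hv : cm ≤ VL uL uO M
    · have hφvM' : φv ∈ M' := ⟨hφv.1, by rw [Set.mem_setOf_eq, hφvval]; exact hv⟩
      have hφvAmax' : φv ∈ Amax uO M' := ⟨hφvM', fun ψ hψ => hφv.2 ψ hψ.1⟩
      have := le_VL hM'c uL uO hφvAmax'
      rw [hφvval] at this
      exact this
    · push_neg at hv
      obtain ⟨ψ, hψ, hψval, -⟩ := VL_attained hM'c hM'ne uL uO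
      have := hM'lb ψ hψ.1
      rw [hψval] at this
      linarith
  · -- strict dominance at -uL
    have h1 : VL uL (pneg uL) M = UminusVal uL M := VL_pneg_eq hMc hMne
    obtain ⟨ψ, hψ, hψval, -⟩ := VL_attained hM'c hM'ne uL (pneg uL)
    have h2 := hM'lb ψ hψ.1
    rw [hψval] at h2
    rw [h1]
    linarith

end case1
/-! ### Forward direction, case 2 -/

section case2

variable {uL : Fin m → Fin n → ℝ} {pstar : Fin m × Fin n}
  (hp : ∀ q : Fin m × Fin n, q ≠ pstar → uL q.1 q.2 < uL pstar.1 pstar.2)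

include hp in
lemma dominated_case2 (hm : 0 < m) (hn : 0 < n) (hA2 : A2cond uL)
    {M : Set (Fin m × Fin n → ℝ)} (hM : IsMenu M) (hsub : M ⊆ MNR uL)
    {F : Finset (Fin m × Fin n → ℝ)} (hF : M = convexHull ℝ (F : Set (Fin m × Fin n → ℝ)))
    (heqmin : UminusVal uL M = UminusVal uL (MNSR uL))
    (hne : MminusSet uL M ≠ MminusSet uL (MNSR uL)) :
    ∃ M', IsMenu M' ∧ ParetoDominates uL M' M := by
  classical
  have hMc := menu_compact hM
  have hMne := menu_nonempty hm hM
  have hNSRM : MNSR uL ⊆ M := MNSR_subset_menu hm hA2 hM hsub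
  have hφpNSR : pureCSP pstar ∈ MNSR uL := pureCSP_mem_MNSR hp
  have hφpM : pureCSP pstar ∈ M := hNSRM hφpNSR
  set cm := UminusVal uL (MNSR uL) with hcm
  clear_value cm
  have hNSRlb : ∀ φ ∈ MNSR uL, cm ≤ linCSP uL φ := by
    intro φ hφ
    rw [hcm]
    exact Umin_le_mem MNSR_isCompact hφ
  have hMlb : ∀ φ ∈ M, cm ≤ linCSP uL φ := by
    intro φ hφ
    rw [← heqmin]
    exact Umin_le_mem hMc hφ
  have hupge : cm ≤ uL pstar.1 pstar.2 := by
    have := hNSRlb _ hφpNSR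
    rwa [lin_pureCSP] at this
  have hNSRmsub : MminusSet uL (MNSR uL) ⊆ MminusSet uL M := by
    intro φ hφ
    refine ⟨hNSRM hφ.1, ?_⟩
    rw [hφ.2]
    exact hcm.symm.trans heqmin.symm
  -- degenerate subcase
  by_cases hdeg : uL pstar.1 pstar.2 ≤ cm
  · exfalso
    apply hne
    have hall : ∀ φ ∈ M, φ = pureCSP pstar := by
      intro φ hφ
      refine eq_pure_of_max hp (hM.2.2.1 hφ) ?_
      exact le_antisymm (lin_le_uplus hp (hM.2.2.1 hφ)) (le_trans hdeg (hMlb φ hφ))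
    have hcmup : cm = uL pstar.1 pstar.2 := le_antisymm hupge hdeg
    ext φ
    constructor
    · intro hφ
      have heqφ := hall φ hφ.1
      subst heqφ
      refine ⟨hφpNSR, ?_⟩
      rw [lin_pureCSP, ← hcmup, hcm]
    · exact fun hφ => hNSRmsub hφ
  push_neg at hdeg
  set Δ := uL pstar.1 pstar.2 - cm with hΔ
  have hΔpos : 0 < Δ := by rw [hΔ]; linarith
  clear_value Δ
  have hFM : (F : Set (Fin m × Fin n → ℝ)) ⊆ M := hF ▸ subset_convexHull ℝ _
  have hFlb : ∀ w ∈ F, cm ≤ linCSP uL w := fun w hw => hMlb w (hFM hw)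
  -- facts about NSR⁻
  have hNSRmconv : Convex ℝ (MminusSet uL (MNSR uL)) := Mminus_convex MNSR_convex
  have hNSRmcl : IsClosed (MminusSet uL (MNSR uL)) := Mminus_closed MNSR_isClosed
  have hNSRmcomp : IsCompact (MminusSet uL (MNSR uL)) := Mminus_compact MNSR_isCompact MNSR_isClosed
  have hNSRmne : (MminusSet uL (MNSR uL)).Nonempty :=
    Mminus_nonempty MNSR_isCompact (MNSR_nonempty hm hn)
  have hNSRmval : ∀ a ∈ MminusSet uL (MNSR uL), linCSP uL a = cm := by
    intro a ha
    rw [ha.2, ← hcm]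
  -- find the bad vertex
  have hφ0ex : ∃ w ∈ F, linCSP uL w = cm ∧ w ∉ MminusSet uL (MNSR uL) := by
    by_contra hcon
    push_neg at hcon
    apply hne
    refine Set.Subset.antisymm ?_ hNSRmsub
    intro φ hφ
    have hval : linCSP uL φ = cm := by
      rw [hφ.2]
      exact heqmin
    have hφhull := mem_hull_filter_min hFlb (hF ▸ hφ.1) hval
    refine convexHull_min ?_ hNSRmconv hφhull
    intro w hw
    obtain ⟨hwF, hwval⟩ := Finset.mem_filter.1 hw
    exact hcon w hwF hwval
  obtain ⟨φ0, hφ0F, hφ0val, hφ0not⟩ := hφ0ex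
  -- separation from NSR⁻
  obtain ⟨cf, u0, hsep1, hsep2⟩ := sep_point hNSRmconv hNSRmcl hφ0not
  set aa := linCSP cf φ0 with haa
  set bb := hS cf (MminusSet uL (MNSR uL)) with hbb
  have hbblt : bb < aa := by
    refine lt_of_le_of_lt ?_ hsep2
    rw [hbb]
    refine csSup_le (hNSRmne.image _) ?_
    rintro - ⟨a, ha, rfl⟩
    exact (hsep1 a ha).le
  have hbbub : ∀ a ∈ MminusSet uL (MNSR uL), linCSP cf a ≤ bb := by
    intro a ha
    rw [hbb]
    exact le_hS hNSRmcomp cf ha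
  clear_value aa bb
  set ρ := aa - bb with hρ
  have hρpos : 0 < ρ := by rw [hρ]; linarith
  clear_value ρ
  -- the positive generators
  set Fplus := F.filter (fun w => cm < linCSP uL w) with hFplus
  clear_value Fplus
  -- choose s0
  have hs0ex : ∃ s0 > 0, ∀ w ∈ Fplus, s0 * (linCSP cf w - aa) < linCSP uL w - cm := by
    by_cases hFp : Fplus.Nonempty
    · set g : (Fin m × Fin n → ℝ) → ℝ :=
        fun w => (linCSP uL w - cm) / (max (linCSP cf w - aa) 1 + 1) with hg
      have hDpos : ∀ w : Fin m × Fin n → ℝ, 0 < max (linCSP cf w - aa) 1 + 1 := by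
        intro w
        have := le_max_right (linCSP cf w - aa) 1
        linarith
      have hgpos : ∀ w ∈ Fplus, 0 < g w := by
        intro w hw
        rw [hFplus] at hw
        have hwgt := (Finset.mem_filter.1 hw).2
        exact div_pos (by linarith) (hDpos w)
      have hinfpos : 0 < Fplus.inf' hFp g := (Finset.lt_inf'_iff hFp).2 hgpos
      refine ⟨Fplus.inf' hFp g, hinfpos, ?_⟩
      intro w hw
      have hle : Fplus.inf' hFp g ≤ g w := Finset.inf'_le g hw
      rw [hFplus] at hw
      have hwgt := (Finset.mem_filter.1 hw).2
      have hwpos : 0 < linCSP uL w - cm := by linarith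
      have hD1 : linCSP cf w - aa < max (linCSP cf w - aa) 1 + 1 := by
        have := le_max_left (linCSP cf w - aa) 1
        linarith
      rcases le_or_gt (linCSP cf w - aa) 0 with hle0 | hgt0
      · have h1 : Fplus.inf' hFp g * (linCSP cf w - aa) ≤ 0 :=
          mul_nonpos_iff.2 (Or.inl ⟨hinfpos.le, hle0⟩)
        linarith
      · have h1 : Fplus.inf' hFp g * (linCSP cf w - aa) ≤ g w * (linCSP cf w - aa) :=
          mul_le_mul_of_nonneg_right hle hgt0.le
        have h2 : g w * (linCSP cf w - aa) < linCSP uL w - cm := by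
          rw [hg]
          rw [div_mul_eq_mul_div, div_lt_iff₀ (hDpos w)]
          nlinarith [mul_lt_mul_of_pos_left hD1 hwpos]
        linarith
    · exact ⟨1, one_pos, fun w hw => absurd ⟨w, hw⟩ hFp⟩
  obtain ⟨s0, hs0pos, hs0prop⟩ := hs0ex
  -- choose ε
  obtain ⟨ε, hε0, hε1, hε2, hε3⟩ : ∃ ε : ℝ, 0 < ε ∧ ε < 1 ∧
      ε * (aa - linCSP cf (pureCSP pstar)) ≤ ρ / 2 ∧ ε * Δ < s0 * ρ / 2 := by
    set β := aa - linCSP cf (pureCSP pstar) with hβ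
    clear_value β
    set e := min (1/2 : ℝ) (min (ρ / (2 * (|β| + 1))) (s0 * ρ / (4 * Δ))) with he
    have he0 : 0 < e := lt_min (by norm_num) (lt_min (div_pos hρpos (by positivity))
      (div_pos (mul_pos hs0pos hρpos) (by linarith)))
    refine ⟨e, he0, lt_of_le_of_lt (min_le_left _ _) (by norm_num), ?_, ?_⟩
    · rcases le_or_gt β 0 with hβ0 | hβ0
      · have h0 : e * β ≤ 0 := mul_nonpos_iff.2 (Or.inl ⟨he0.le, hβ0⟩)
        linarith
      · have heler : e ≤ ρ / (2 * (|β| + 1)) := le_trans (min_le_right _ _) (min_le_left _ _)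
        have h1 : e * β ≤ ρ / (2 * (|β| + 1)) * β := mul_le_mul_of_nonneg_right heler hβ0.le
        have h2 : ρ / (2 * (|β| + 1)) * β ≤ ρ / 2 := by
          rw [div_mul_eq_mul_div, div_le_div_iff₀ (by positivity) (by norm_num : (0:ℝ) < 2)]
          nlinarith [le_abs_self β, abs_nonneg β, mul_le_mul_of_nonneg_left (le_abs_self β) hρpos.le]
        linarith
    · have heler : e ≤ s0 * ρ / (4 * Δ) := le_trans (min_le_right _ _) (min_le_right _ _)
      have h1 : e * Δ ≤ s0 * ρ / (4 * Δ) * Δ := mul_le_mul_of_nonneg_right heler hΔpos.le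
      have h2 : s0 * ρ / (4 * Δ) * Δ = s0 * ρ / 4 := by
        field_simp
      have h3 : 0 < s0 * ρ := mul_pos hs0pos hρpos
      rw [h2] at h1
      linarith
  -- the new point
  set ψs := (1 - ε) • φ0 + ε • pureCSP pstar with hψs
  have hψsM : ψs ∈ M := by
    rw [hψs]
    exact hM.2.1 (hFM hφ0F) hφpM (by linarith) hε0.le (by ring)
  have hψsuL : linCSP uL ψs = cm + ε * Δ := by
    rw [hψs, linCSP_comb, hφ0val, lin_pureCSP, hΔ]
    ring
  have hψscf : linCSP cf ψs = (1 - ε) * aa + ε * linCSP cf (pureCSP pstar) := by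
    rw [hψs, linCSP_comb, ← haa]
  clear_value ψs
  -- the dominating menu
  set G : Finset (Fin m × Fin n → ℝ) := insert ψs Fplus with hG
  clear_value G
  set Q := convexHull ℝ (G : Set (Fin m × Fin n → ℝ)) with hQ
  clear_value Q
  set M' := convexJoin ℝ (MNSR uL) Q with hM'def
  clear_value M'
  have hψsQ : ψs ∈ Q := by
    rw [hQ]
    refine subset_convexHull ℝ _ ?_
    rw [hG]
    exact_mod_cast Finset.mem_insert_self ψs Fplus
  have hQne : Q.Nonempty := ⟨ψs, hψsQ⟩
  have hGM : (G : Set (Fin m × Fin n → ℝ)) ⊆ M := by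
    intro w hw
    rw [hG] at hw
    rcases Finset.mem_insert.1 (by exact_mod_cast hw) with rfl | hwF
    · exact hψsM
    · rw [hFplus] at hwF
      exact hFM (Finset.mem_coe.2 (Finset.filter_subset _ _ hwF))
  have hQM : Q ⊆ M := by rw [hQ]; exact convexHull_min hGM hM.2.1
  have hQconv : Convex ℝ Q := by rw [hQ]; exact convex_convexHull ℝ _
  have hM'M : M' ⊆ M := by rw [hM'def]; exact convexJoin_subset hNSRM hQM hM.2.1
  have hM'conv : Convex ℝ M' := by rw [hM'def]; exact MNSR_convex.convexJoin hQconv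
  have hM'comp : IsCompact M' := by
    rw [hM'def, hQ]
    exact isCompact_convexJoin MNSR_isCompact (G.finite_toSet.isCompact_convexHull ℝ)
  have hNSRM' : MNSR uL ⊆ M' := by rw [hM'def]; exact subset_convexJoin_left hQne
  have hM'menu : IsMenu M' := by
    refine ⟨hM'comp.isClosed, hM'conv, hM'M.trans hM.2.2.1, ?_⟩
    intro x hx
    obtain ⟨j, hj⟩ := BRL_nonempty (uL := uL) hn x
    exact ⟨pureVec j, pureVec_mem j, hNSRM' (prod_pure_mem_MNSR hx hj)⟩
  have hM'ne : M'.Nonempty := ⟨_, hNSRM' hφpNSR⟩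
  have hGgt : ∀ w ∈ G, cm < linCSP uL w := by
    intro w hw
    rw [hG] at hw
    rcases Finset.mem_insert.1 hw with rfl | hwF
    · rw [hψsuL]
      nlinarith [mul_pos hε0 hΔpos]
    · rw [hFplus] at hwF
      exact (Finset.mem_filter.1 hwF).2
  clear hψsM hGM
  have hQgt : ∀ q ∈ Q, cm < linCSP uL q := by
    intro q hq
    rw [hQ] at hq
    exact convexHull_min (fun w hw => hGgt w (Finset.mem_coe.1 hw)) (convex_gt_half uL cm) hq
  have hM'lb : ∀ φ ∈ M', cm ≤ linCSP uL φ := by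
    intro φ hφ
    rw [hM'def] at hφ
    exact convexJoin_subset (fun a ha => hNSRlb a ha) (fun q hq => (hQgt q hq).le)
      (convex_ge_half uL cm) hφ
  -- bottom of M' is NSR⁻
  have hbot : ∀ φ ∈ M', linCSP uL φ = cm → φ ∈ MminusSet uL (MNSR uL) := by
    intro φ hφ hval
    rw [hM'def, mem_convexJoin] at hφ
    obtain ⟨a, haNSR, q, hqQ, hseg⟩ := hφ
    obtain ⟨ta, tb, hta, htb, hsum, rfl⟩ := hseg
    rw [linCSP_comb] at hval
    have h1 := hNSRlb a haNSR
    have h2 := hQgt q hqQ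
    have htb0 : tb = 0 := by
      by_contra htbne
      have htbpos : 0 < tb := lt_of_le_of_ne htb (Ne.symm htbne)
      have e1 : ta * cm ≤ ta * linCSP uL a := mul_le_mul_of_nonneg_left h1 hta
      have e2 : tb * cm < tb * linCSP uL q := mul_lt_mul_of_pos_left h2 htbpos
      have e3 : ta * cm + tb * cm = cm := by rw [← add_mul, hsum, one_mul]
      linarith
    have hta1 : ta = 1 := by linarith
    have heqa : ta • a + tb • q = a := by rw [htb0, hta1, one_smul, zero_smul, add_zero]
    rw [heqa]
    have hlina : linCSP uL a = cm := by
      rw [htb0, hta1] at hval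
      linarith
    exact ⟨haNSR, by rw [hlina]; exact hcm⟩
  -- pointwise dominance
  have hdompt : ∀ uO, VL uL uO M ≤ VL uL uO M' := by
    intro uO
    obtain ⟨φv, hφv, hφvval, -⟩ := VL_attained hMc hMne uL uO
    have hφvhull := amax_mem_hull hF hMc hMne uO hφv
    set Fh := F.filter (fun w => linCSP uO w = hS uO M) with hFh
    clear_value Fh
    have hFhne : Fh.Nonempty := by
      by_contra h
      rw [Finset.not_nonempty_iff_eq_empty] at h
      rw [h] at hφvhull
      simp only [Finset.coe_empty, convexHull_empty] at hφvhull
      exact hφvhull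
    obtain ⟨w, hwFh, hwmax⟩ := Finset.exists_max_image Fh (linCSP uL) hFhne
    rw [hFh] at hwFh
    have hwF : w ∈ F := (Finset.mem_filter.1 hwFh).1
    have hwuO : linCSP uO w = hS uO M := (Finset.mem_filter.1 hwFh).2
    have hvle : VL uL uO M ≤ linCSP uL w := by
      rw [← hφvval]
      exact hull_le_level (fun y hy => hwmax y hy) φv hφvhull
    have hwAmax : w ∈ Amax uO M := mem_amax_of_ge hMc (hFM hwF) hwuO.ge
    have hwge : linCSP uL w ≤ VL uL uO M := le_VL hMc uL uO hwAmax
    have hwv : linCSP uL w = VL uL uO M := le_antisymm hwge hvle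
    by_cases hv : cm < VL uL uO M
    · have hwFplus : w ∈ Fplus := by
        rw [hFplus]
        exact Finset.mem_filter.2 ⟨hwF, by rw [hwv]; exact hv⟩
      have hwQ : w ∈ Q := by
        rw [hQ]
        refine subset_convexHull ℝ _ ?_
        rw [hG]
        exact_mod_cast Finset.mem_insert_of_mem hwFplus
      have hwM' : w ∈ M' := by
        rw [hM'def]
        exact subset_convexJoin_right (MNSR_nonempty hm hn) hwQ
      have hSle : hS uO M' ≤ hS uO M := hS_le_of_subset hMc hM'ne hM'M uO
      have hwAmax' : w ∈ Amax uO M' := mem_amax_of_ge hM'comp hwM' (le_trans hSle hwuO.ge)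
      have := le_VL hM'comp uL uO hwAmax'
      rw [hwv] at this
      exact this
    · push_neg at hv
      obtain ⟨ψ, hψ, hψval, -⟩ := VL_attained hM'comp hM'ne uL uO
      have := hM'lb ψ hψ.1
      rw [hψval] at this
      linarith
  -- strictness
  set uOs := pmix s0 cf (-1) uL with hOs
  clear_value uOs
  have hlinOs : ∀ φ, linCSP uOs φ = s0 * linCSP cf φ - linCSP uL φ := by
    intro φ
    rw [hOs, linCSP_pmix]
    ring
  have hVLM : VL uL uOs M = cm := by
    have hFhsub : ∀ w ∈ F.filter (fun w => linCSP uOs w = hS uOs M), linCSP uL w = cm := by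
      intro w hw
      obtain ⟨hwF, hweq⟩ := Finset.mem_filter.1 hw
      rcases eq_or_lt_of_le (hFlb w hwF) with heq | hlt
      · exact heq.symm
      · exfalso
        have hwFplus : w ∈ Fplus := by
          rw [hFplus]
          exact Finset.mem_filter.2 ⟨hwF, hlt⟩
        have hs0w := hs0prop w hwFplus
        have hφ0M : φ0 ∈ M := hFM hφ0F
        have hφ0le := le_hS hMc uOs hφ0M
        have hφ0Os : linCSP uOs φ0 = s0 * aa - cm := by
          rw [hlinOs, hφ0val, haa]
        have hwOs := hlinOs w
        rw [hweq] at hwOs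
        nlinarith
    obtain ⟨φa, hφa, hφaval, -⟩ := VL_attained hMc hMne uL uOs
    have hφahull := amax_mem_hull hF hMc hMne uOs hφa
    have hle : linCSP uL φa ≤ cm :=
      hull_le_level (fun y hy => (hFhsub y hy).le) φa hφahull
    have hge : cm ≤ linCSP uL φa := hMlb φa hφa.1
    rw [← hφaval]
    exact le_antisymm hle hge
  have hgap : ∀ a ∈ MminusSet uL (MNSR uL), linCSP uOs a < linCSP uOs ψs := by
    intro a ha
    have h1 : linCSP uL a = cm := hNSRmval a ha
    have h2 : linCSP cf a ≤ bb := hbbub a ha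
    rw [hlinOs, hlinOs, hψscf, hψsuL, h1]
    have h3 : s0 * linCSP cf a ≤ s0 * bb := mul_le_mul_of_nonneg_left h2 hs0pos.le
    have h4 : s0 * (ε * (aa - linCSP cf (pureCSP pstar))) ≤ s0 * (ρ / 2) :=
      mul_le_mul_of_nonneg_left hε2 hs0pos.le
    rw [hρ] at hε3 h4
    have e1 : s0 * ((1 - ε) * aa + ε * linCSP cf (pureCSP pstar))
        = s0 * aa - s0 * (ε * (aa - linCSP cf (pureCSP pstar))) := by ring
    have e2 : s0 * ((aa - bb) / 2) + s0 * (aa - bb) / 2 = s0 * aa - s0 * bb := by ring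
    linarith [h3, h4, hε3, e1, e2]
  have hψsM' : ψs ∈ M' := by
    rw [hM'def]
    exact subset_convexJoin_right (MNSR_nonempty hm hn) hψsQ
  obtain ⟨ψb, hψb, hψbval, -⟩ := VL_attained hM'comp hM'ne uL uOs
  have hψbgt : cm < linCSP uL ψb := by
    rcases eq_or_lt_of_le (hM'lb ψb hψb.1) with heq | hlt
    · exfalso
      have hmem := hbot ψb hψb.1 heq.symm
      have hg1 := hgap ψb hmem
      have hg2 := hψb.2 ψs hψsM'
      linarith
    · exact hlt
  refine ⟨M', hM'menu, hdompt, uOs, ?_⟩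
  rw [hVLM, ← hψbval]
  exact hψbgt

end case2
end PO
/-- Assume (A1) and (A2). A polytopal menu contained in the no-regret menu
is Pareto-optimal iff its set of learner-minimizing points equals that of the
no-swap-regret menu. -/
theorem pareto_optimal_characterization_polytopal_no_regret
    (m n : ℕ) (hm : 0 < m) (hn : 0 < n)
    (uL : Fin m → Fin n → ℝ) (hbound : ∀ i j, uL i j ∈ Set.Icc (-1 : ℝ) 1)
    (hA1 : ∃ p : Fin m × Fin n, ∀ q : Fin m × Fin n, q ≠ p → uL q.1 q.2 < uL p.1 p.2)
    (hA2 : A2cond uL)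
    (M : Set (Fin m × Fin n → ℝ)) (hM : IsMenu M)
    (hpoly : ∃ F : Finset (Fin m × Fin n → ℝ), M = convexHull ℝ (F : Set (Fin m × Fin n → ℝ)))
    (hsub : M ⊆ MNR uL) :
    ParetoOptimal uL M ↔ MminusSet uL M = MminusSet uL (MNSR uL) := by
  obtain ⟨pstar, hp⟩ := hA1
  constructor
  · intro hPO
    by_contra hne
    have hMc := PO.menu_compact hM
    have hNSRM : MNSR uL ⊆ M := PO.MNSR_subset_menu hm hA2 hM hsub
    obtain ⟨φn, hφn⟩ := PO.Mminus_nonempty (uL := uL) PO.MNSR_isCompact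
      (PO.MNSR_nonempty hm hn)
    have hle : UminusVal uL M ≤ UminusVal uL (MNSR uL) := by
      have := PO.Umin_le_mem (uL := uL) hMc (hNSRM hφn.1)
      rwa [hφn.2] at this
    rcases lt_or_eq_of_le hle with hlt | heq
    · obtain ⟨M', hM'menu, hdom⟩ := PO.dominated_case1 hm hn hA2 hM hsub hlt
      exact hPO.2 M' hM'menu hdom
    · obtain ⟨F, hF⟩ := hpoly
      obtain ⟨M', hM'menu, hdom⟩ := PO.dominated_case2 hp hm hn hA2 hM hsub hF heq hne
      exact hPO.2 M' hM'menu hdom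
  · intro hmin
    exact PO.pareto_of_minus_eq hp hm hbound hA2 hM hsub hmin
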